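/- arXiv:2201.03631 — 4 statements merged into one kernel-verified Lean document; each statement's English description precedes it below -/
import Mathlib

section
/- Let M be a small elementary submodel of the monster model 𝕄. If an ultraimaginary a_E is bounded over M (i.e., a_E ∈ bddᵘ(M)), then a_E is definable over M (i.e., a_E ∈ dclᵘ(M)). -/
open FirstOrder Cardinal

universe u v w

namespace BddUltra

variable (L : FirstOrder.Language.{u, u}) (M : Type u) [L.Structure M]

/-- The automorphism group of `M` (composition as multiplication). -/
instance : Group (M ≃[L] M) where
  mul f g := f.comp g
  one := Language.Equiv.refl L M
  inv := Language.Equiv.symm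
  mul_assoc f g h := by ext x; rfl
  one_mul f := by ext x; rfl
  mul_one f := by ext x; rfl
  inv_mul_cancel f := by ext x; exact f.toEquiv.symm_apply_apply x

/-- The cardinality `|T|` of the theory: the cardinality of the language plus `ℵ₀`. -/
def cardT : Cardinal.{u} := L.card + ℵ₀

/-- Two tuples realize the same complete type over `∅`. -/
def SameType {α : Type v} (a b : α → M) : Prop :=
  ∀ φ : L.Formula α, φ.Realize a ↔ φ.Realize b

/-- Two tuples realize the same complete type over the set `A ⊆ M` of parameters. -/
def SameTypeOver (A : Set M) {α : Type v} (a b : α → M) : Prop :=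
  ∀ φ : L.Formula (↥A ⊕ α),
    φ.Realize (Sum.elim (Subtype.val : ↥A → M) a) ↔
      φ.Realize (Sum.elim (Subtype.val : ↥A → M) b)

theorem SameType.comp {α : Type v} {γ : Type w} {a b : α → M} (h : SameType L M a b)
    (g : γ → α) : SameType L M (a ∘ g) (b ∘ g) := by
  intro φ
  have := h (φ.relabel g)
  rwa [Language.Formula.realize_relabel, Language.Formula.realize_relabel] at this

/-- An invariant equivalence relation of arity `α` on `α`-tuples from `M`. -/
structure IER (α : Type u) : Type u where
  rel : (α → M) → (α → M) → Prop
  equiv : Equivalence rel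
  invariant : ∀ a b c d : α → M,
    SameType L M (Sum.elim a b) (Sum.elim c d) → (rel a b ↔ rel c d)

def IER.setoid {α : Type u} (E : IER L M α) : Setoid (α → M) := ⟨E.rel, E.equiv⟩

/-- The pair (juxtaposition) of two invariant equivalence relations. -/
def IER.prod {α β : Type u} (E : IER L M α) (F : IER L M β) : IER L M (α ⊕ β) where
  rel x y := E.rel (x ∘ Sum.inl) (y ∘ Sum.inl) ∧ F.rel (x ∘ Sum.inr) (y ∘ Sum.inr)
  equiv := ⟨fun _ => ⟨E.equiv.refl _, F.equiv.refl _⟩,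
    fun h => ⟨E.equiv.symm h.1, F.equiv.symm h.2⟩,
    fun h h' => ⟨E.equiv.trans h.1 h'.1, F.equiv.trans h.2 h'.2⟩⟩
  invariant := by
    intro a b c d h
    have e1 : ∀ (x : α ⊕ β → M) (y : α ⊕ β → M),
        (Sum.elim x y) ∘ (Sum.map Sum.inl Sum.inl : α ⊕ α → (α ⊕ β) ⊕ (α ⊕ β))
          = Sum.elim (x ∘ Sum.inl) (y ∘ Sum.inl) := by
      intro x y; funext i; cases i <;> rfl
    have e2 : ∀ (x : α ⊕ β → M) (y : α ⊕ β → M),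
        (Sum.elim x y) ∘ (Sum.map Sum.inr Sum.inr : β ⊕ β → (α ⊕ β) ⊕ (α ⊕ β))
          = Sum.elim (x ∘ Sum.inr) (y ∘ Sum.inr) := by
      intro x y; funext i; cases i <;> rfl
    have h1 := h.comp (L := L) (M := M) (Sum.map Sum.inl Sum.inl)
    have h2 := h.comp (L := L) (M := M) (Sum.map Sum.inr Sum.inr)
    rw [e1, e1] at h1
    rw [e2, e2] at h2
    exact and_congr (E.invariant _ _ _ _ h1) (F.invariant _ _ _ _ h2)

/-- The set of automorphisms fixing the ultraimaginary `a_E`. -/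
def autU {α : Type u} (E : IER L M α) (a : α → M) : Set (M ≃[L] M) :=
  {σ | E.rel a (⇑σ ∘ a)}

/-- The set of automorphisms fixing the set `A` pointwise. -/
def autSet (A : Set M) : Set (M ≃[L] M) := {σ | ∀ x ∈ A, σ x = x}

/-- The set of automorphisms fixing the set `A` and the tuple `u` pointwise. -/
def autSetTup (A : Set M) {γ : Type v} (u : γ → M) : Set (M ≃[L] M) :=
  {σ | (∀ x ∈ A, σ x = x) ∧ ∀ i, σ (u i) = u i}

/-- The ultraimaginary `b_F` is bounded over a parameter set whose pointwise
stabilizer is `X`: the `X`-orbit of `b` meets fewer than `κ` classes of `F`. -/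
def BddU (κ : Cardinal.{u}) (X : Set (M ≃[L] M)) {β : Type u} (F : IER L M β)
    (b : β → M) : Prop :=
  ∃ S : Set (β → M), #S < κ ∧ ∀ σ ∈ X, ∃ s ∈ S, F.rel (⇑σ ∘ b) s

/-- The cardinality of the orbit of the ultraimaginary `b_F` under the set `X`
of automorphisms. -/
def orbitCard (X : Set (M ≃[L] M)) {β : Type u} (F : IER L M β) (b : β → M) :
    Cardinal.{u} :=
  #(Set.range fun σ : X => Quotient.mk F.setoid (⇑σ.1 ∘ b))

/-- `b ⫝ᵇᵘ_A c`, expressed in terms of the pointwise stabilizers `XA`, `XAb`, `XAc` of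
`A`, `Ab` and `Ac`: an ultraimaginary is bounded over `Ab` and over `Ac` iff it is
bounded over `A`. -/
def IndepBU (κ : Cardinal.{u}) (XA XAb XAc : Set (M ≃[L] M)) : Prop :=
  ∀ (δ : Type u) (H : IER L M δ) (d : δ → M),
    (BddU L M κ XAb H d ∧ BddU L M κ XAc H d) ↔ BddU L M κ XA H d

/-- The set of automorphisms fixing an elementary substructure pointwise. -/
def autES (N : L.ElementarySubstructure M) : Set (M ≃[L] M) :=
  autSet L M (N : Set M)

/-- `Autf(𝕄/x)` where `X = Aut(𝕄/x)`: the subgroup generated by all pointwise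
stabilizers of small models that are contained in `X`. -/
def autfGen (κ : Cardinal.{u}) (X : Set (M ≃[L] M)) : Subgroup (M ≃[L] M) :=
  Subgroup.closure {σ | ∃ N : L.ElementarySubstructure M,
    #(N : Set M) < κ ∧ autES L M N ⊆ X ∧ σ ∈ autES L M N}

/-- The group of Lascar strong automorphisms over the set `A ⊆ M`: generated by the
pointwise stabilizers of small models containing `A`. -/
def lascarGrp (κ : Cardinal.{u}) (A : Set M) : Subgroup (M ≃[L] M) :=
  Subgroup.closure {σ | ∃ N : L.ElementarySubstructure M,
    #(N : Set M) < κ ∧ A ⊆ (N : Set M) ∧ σ ∈ autES L M N}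

/-- κ-saturation: every finitely realizable set of formulas over a parameter tuple of
arity `< κ`, in `< κ` many variables, is realized. -/
def Saturated (κ : Cardinal.{u}) : Prop :=
  ∀ (α β : Type u), #α < κ → #β < κ → ∀ (a : α → M) (p : Set (L.Formula (α ⊕ β))),
    (∀ s : Finset (L.Formula (α ⊕ β)), ↑s ⊆ p →
      ∃ b : β → M, ∀ φ ∈ s, φ.Realize (Sum.elim a b)) →
    ∃ b : β → M, ∀ φ ∈ p, φ.Realize (Sum.elim a b)

/-- Strong κ-homogeneity: tuples of arity `< κ` with the same type over `∅` are
conjugate under an automorphism. -/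
def Homog (κ : Cardinal.{u}) : Prop :=
  ∀ (α : Type u) (a b : α → M), #α < κ → SameType L M a b →
    ∃ σ : M ≃[L] M, ∀ i, σ (a i) = b i

/-- `M` is a monster model with bound `κbar`: `κbar` is a sufficiently large
(uncountable, regular, strong limit, above `|T|`) cardinal, and `M` is
`κbar`-saturated and strongly `κbar`-homogeneous. -/
structure Monster (κbar : Cardinal.{u}) : Prop where
  aleph0_lt : ℵ₀ < κbar
  isRegular : κbar.IsRegular
  strongLimit : ∀ ρ : Cardinal.{u}, ρ < κbar → 2 ^ ρ < κbar
  lang_lt : L.card < κbar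
  saturated : Saturated L M κbar
  homog : Homog L M κbar

/-- A hyperimaginary: the class of a countable tuple under a countably
type-definable (over `∅`) equivalence relation. -/
structure Hyp : Type u where
  rep : ℕ → M
  fmls : Set (L.Formula (ℕ ⊕ ℕ))
  countable : fmls.Countable
  equiv : Equivalence fun a b : ℕ → M => ∀ φ ∈ fmls, φ.Realize (Sum.elim a b)

/-- The automorphisms fixing each hyperimaginary in the set `A`. -/
def autHyp (A : Set (Hyp L M)) : Set (M ≃[L] M) :=
  {σ | ∀ h ∈ A, ∀ φ ∈ h.fmls, φ.Realize (Sum.elim h.rep (⇑σ ∘ h.rep))}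

/-- The automorphisms fixing each hyperimaginary in `A` and the tuple `u` pointwise. -/
def autHypTup (A : Set (Hyp L M)) {γ : Type v} (u : γ → M) : Set (M ≃[L] M) :=
  {σ | σ ∈ autHyp L M A ∧ ∀ i, σ (u i) = u i}

/-- Flattening of a finite subsequence of a sequence of tuples into a single tuple. -/
def flatten {ι : Type v} {β : Type w} (f : ι → β → M) {n : ℕ} (s : Fin n → ι) :
    Fin n × β → M := fun p => f (s p.1) p.2

/-- A sequence of tuples is `A`-indiscernible (`A ⊆ M` a set of real parameters). -/
def IndiscOver (A : Set M) {ι : Type v} [Preorder ι] {β : Type w} (f : ι → β → M) : Prop :=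
  ∀ (n : ℕ) (s t : Fin n → ι), StrictMono s → StrictMono t →
    SameTypeOver L M A (flatten M f s) (flatten M f t)

/-- Two sequences have the same Ehrenfeucht–Mostowski type over `A ⊆ M`. -/
def SameEMOver (A : Set M) {ι : Type v} [Preorder ι] {ι' : Type w} [Preorder ι']
    {β : Type u} (f : ι → β → M) (g : ι' → β → M) : Prop :=
  ∀ (n : ℕ) (s : Fin n → ι) (t : Fin n → ι'), StrictMono s → StrictMono t →
    SameTypeOver L M A (flatten M f s) (flatten M g t)

/-- A sequence of tuples is `A`-indiscernible, for `A` a set of hyperimaginaries: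
any two increasing tuples from the sequence are conjugate under `Aut(𝕄/A)`. -/
def IndiscOverHyp (A : Set (Hyp L M)) {ι : Type v} [Preorder ι] {β : Type w}
    (f : ι → β → M) : Prop :=
  ∀ (n : ℕ) (s t : Fin n → ι), StrictMono s → StrictMono t →
    ∃ σ ∈ autHyp L M A, ∀ (i : Fin n) (x : β), σ (f (s i) x) = f (t i) x

/-- Two sequences have the same EM-type over the set `A` of hyperimaginaries. -/
def SameEMOverHyp (A : Set (Hyp L M)) {ι : Type v} [Preorder ι] {ι' : Type w} [Preorder ι']
    {β : Type u} (f : ι → β → M) (g : ι' → β → M) : Prop :=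
  ∀ (n : ℕ) (s : Fin n → ι) (t : Fin n → ι'), StrictMono s → StrictMono t →
    ∃ σ ∈ autHyp L M A, ∀ (i : Fin n) (x : β), σ (f (s i) x) = g (t i) x

/-- A sequence of `β`-tuples from `N`, indexed by an arbitrary small linear order. -/
structure Seq (N : Type u) (β : Type u) : Type (u + 1) where
  idx : Type u
  [ord : LinearOrder idx]
  val : idx → β → N

attribute [instance] Seq.ord

/-- Concatenation `I + J` of sequences. -/
def Seq.concat {N β : Type u} (I J : Seq N β) : Seq N β where
  idx := I.idx ⊕ₗ J.idx
  val := fun x => Sum.elim I.val J.val (ofLex x)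

/-- The sequence `I` flattened into a single tuple. -/
def Seq.flat {N β : Type u} (I : Seq N β) : I.idx × β → N := fun p => I.val p.1 p.2

/-- The image `σ · I` of a sequence under an automorphism. -/
def Seq.map {β : Type u} (σ : M ≃[L] M) (I : Seq M β) : Seq M β where
  idx := I.idx
  ord := I.ord
  val := fun i x => σ (I.val i x)

/-- The sequence `(b_i)_{i < ω}` packaged as a `Seq`. -/
def Seq.ofNat {N β : Type u} (b : ℕ → β → N) : Seq N β where
  idx := ULift.{u} ℕ
  val := fun n => b n.down

/-- `I ∼_A J`: both sequences are infinite and `I + J` or `J + I` is `A`-indiscernible. -/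
def SimSeq (A : Set M) {β : Type u} (I J : Seq M β) : Prop :=
  Infinite I.idx ∧ Infinite J.idx ∧
    (IndiscOver L M A (I.concat J).val ∨ IndiscOver L M A (J.concat I).val)

/-- `I ≈_A J`: the transitive closure of `∼_A`. -/
def ApproxSeq (A : Set M) {β : Type u} : Seq M β → Seq M β → Prop :=
  Relation.TransGen (SimSeq L M A)

/-- `I ∼_A J` for `A` a set of hyperimaginaries. -/
def SimSeqHyp (A : Set (Hyp L M)) {β : Type u} (I J : Seq M β) : Prop :=
  Infinite I.idx ∧ Infinite J.idx ∧
    (IndiscOverHyp L M A (I.concat J).val ∨ IndiscOverHyp L M A (J.concat I).val)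

/-- `I ≈_A J` for `A` a set of hyperimaginaries. -/
def ApproxSeqHyp (A : Set (Hyp L M)) {β : Type u} : Seq M β → Seq M β → Prop :=
  Relation.TransGen (SimSeqHyp L M A)

/-- `u ⫝ᵇᵘ_A v` for tuples `u`, `v` over a set `A ⊆ M` of real parameters. -/
def IndepBUReal (κ : Cardinal.{u}) (A : Set M) {γ : Type v} {δ : Type w}
    (x : γ → M) (y : δ → M) : Prop :=
  IndepBU L M κ (autSet L M A) (autSetTup L M A x) (autSetTup L M A y)

/-- `u ⫝ᵇᵘ_A v` for tuples `u`, `v` over a set `A` of hyperimaginaries. -/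
def IndepBUHyp (κ : Cardinal.{u}) (A : Set (Hyp L M)) {γ : Type v} {δ : Type w}
    (x : γ → M) (y : δ → M) : Prop :=
  IndepBU L M κ (autHyp L M A) (autHypTup L M A x) (autHypTup L M A y)

/-- A total `⫝ᵇᵘ`-Morley sequence over the set `A ⊆ M`. -/
def TotalMorleyReal (κ : Cardinal.{u}) (A : Set M) {β : Type u} (b : ℕ → β → M) : Prop :=
  IndiscOver L M A b ∧
    ∀ I J : Seq M β, #I.idx < κ → #J.idx < κ →
      SameEMOver L M A ((I.concat J).val) b →
        IndepBUReal L M κ A I.flat J.flat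

/-- A total `⫝ᵇᵘ`-Morley sequence over the set `A` of hyperimaginaries. -/
def TotalMorleyHyp (κ : Cardinal.{u}) (A : Set (Hyp L M)) {β : Type u}
    (b : ℕ → β → M) : Prop :=
  IndiscOverHyp L M A b ∧
    ∀ I J : Seq M β, #I.idx < κ → #J.idx < κ →
      SameEMOverHyp L M A ((I.concat J).val) b →
        IndepBUHyp L M κ A I.flat J.flat

/-- `tp(b/Ac)` divides over `A`. -/
def Divides (A : Set M) {β : Type v} {γ : Type w} (b : β → M) (c : γ → M) : Prop :=
  ∃ ci : ℕ → γ → M, ci 0 = c ∧ IndiscOver L M A ci ∧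
    ¬∃ b' : β → M, ∀ (i : ℕ) (φ : L.Formula (↥A ⊕ (β ⊕ γ))),
      φ.Realize (Sum.elim (Subtype.val : ↥A → M) (Sum.elim b c)) →
        φ.Realize (Sum.elim (Subtype.val : ↥A → M) (Sum.elim b' (ci i)))

/-- The partition relation `λ → (β)^{<ω}_γ`. -/
def ArrowRel (lam : Cardinal.{u}) (ot : Ordinal.{u}) (c : Cardinal.{u}) : Prop :=
  ∀ f : Finset lam.ord.ToType → c.ord.ToType,
    ∃ X : Set lam.ord.ToType, Nonempty (↥X ≃o ot.ToType) ∧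
      ∀ s t : Finset lam.ord.ToType, ↑s ⊆ X → ↑t ⊆ X → s.card = t.card → f s = f t

/-- The Lascar strong automorphism group over a set `A` of hyperimaginaries:
generated by pointwise stabilizers of small models fixing every element of `A`. -/
def lascarHypGrp (κ : Cardinal.{u}) (A : Set (Hyp L M)) : Subgroup (M ≃[L] M) :=
  Subgroup.closure {σ | ∃ N : L.ElementarySubstructure M,
    #(N : Set M) < κ ∧ autES L M N ⊆ autHyp L M A ∧ σ ∈ autES L M N}

/-- `b_F ⫝ᵇᵘ_{a_E} c_G` for ultraimaginaries. -/
def IndepU (κ : Cardinal.{u}) {α β γ : Type u} (E : IER L M α) (a : α → M)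
    (F : IER L M β) (b : β → M) (G : IER L M γ) (c : γ → M) : Prop :=
  IndepBU L M κ (autU L M E a) (autU L M E a ∩ autU L M F b)
    (autU L M E a ∩ autU L M G c)


section Aux

variable {L' : FirstOrder.Language.{u, u}} {M' : Type u} [L'.Structure M']
variable (N : L'.ElementarySubstructure M') {α : Type u}

def solSet {γ : Type u} (e : γ → M') (ψ : L'.Formula (γ ⊕ α)) : Set (α → N) :=
  {c | ψ.Realize (Sum.elim e (fun j => ((c j : M'))))}

def QQ (U : Ultrafilter (α → N)) {γ : Type u} (e : γ → M') : Set (L'.Formula (γ ⊕ α)) :=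
  {ψ | solSet N e ψ ∈ U}

def RealQ (U : Ultrafilter (α → N)) {γ : Type u} (e : γ → M') (b : α → M') : Prop :=
  ∀ ψ : L'.Formula (γ ⊕ α), ψ.Realize (Sum.elim e b) ↔ ψ ∈ QQ N U e

lemma solSet_not {γ : Type u} (e : γ → M') (ψ : L'.Formula (γ ⊕ α)) :
    solSet N e ψ.not = (solSet N e ψ)ᶜ := by
  ext c; simp [solSet]

lemma not_mem_QQ {U : Ultrafilter (α → N)} {γ : Type u} {e : γ → M'} {ψ : L'.Formula (γ ⊕ α)} :
    ψ.not ∈ QQ N U e ↔ ψ ∉ QQ N U e := by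
  simp [QQ, solSet_not, Ultrafilter.compl_mem_iff_notMem]

lemma RealQ.of_forward {U : Ultrafilter (α → N)} {γ : Type u} {e : γ → M'} {b : α → M'}
    (h : ∀ ψ ∈ QQ N U e, Language.Formula.Realize ψ (Sum.elim e b)) : RealQ N U e b := by
  intro ψ
  refine ⟨fun hr => ?_, h ψ⟩
  by_contra hn
  have := h ψ.not ((not_mem_QQ N).2 hn)
  rw [Language.Formula.realize_not] at this
  exact this hr

lemma sum_elim_comp_map {γ γ' : Type u} (e : γ → M') (r : γ' → γ) (x : α → M') :
    Sum.elim (e ∘ r) x = Sum.elim e x ∘ Sum.map r id := by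
  funext z; cases z <;> rfl

lemma RealQ.restrict {U : Ultrafilter (α → N)} {γ γ' : Type u} {e : γ → M'} {b : α → M'}
    (h : RealQ N U e b) (r : γ' → γ) : RealQ N U (e ∘ r) b := by
  intro ψ
  have h1 : ψ.Realize (Sum.elim (e ∘ r) b) ↔
      (ψ.relabel (Sum.map r id)).Realize (Sum.elim e b) := by
    rw [Language.Formula.realize_relabel, sum_elim_comp_map]
  have h2 : ψ ∈ QQ N U (e ∘ r) ↔ ψ.relabel (Sum.map r id) ∈ QQ N U e := by
    unfold QQ
    have : solSet N (e ∘ r) ψ = solSet N e (ψ.relabel (Sum.map r id)) := by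
      ext c
      simp only [solSet, Set.mem_setOf_eq, Language.Formula.realize_relabel,
        sum_elim_comp_map]
    rw [Set.mem_setOf_eq, Set.mem_setOf_eq, this]
  rw [h1, h2]
  exact h _

lemma QQ.invariance {U : Ultrafilter (α → N)} {γ₀ : Type u} {e₀ e₀' : γ₀ → M'}
    (hst : SameType L' M' (Sum.elim (Subtype.val : N → M') e₀) (Sum.elim Subtype.val e₀'))
    (ψ : L'.Formula ((N ⊕ γ₀) ⊕ α)) :
    ψ ∈ QQ N U (Sum.elim Subtype.val e₀) ↔ ψ ∈ QQ N U (Sum.elim Subtype.val e₀') := by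
  unfold QQ
  have key : ∀ (e : γ₀ → M') (c : α → N),
      Sum.elim (Sum.elim (Subtype.val : N → M') e) (fun j => ((c j : M')))
        = Sum.elim (Subtype.val : N → M') e ∘ Sum.elim id (fun j => Sum.inl (c j)) := by
    intro e c; funext z; cases z <;> rfl
  have : solSet N (Sum.elim Subtype.val e₀) ψ = {c : α → N |
      (ψ.relabel (Sum.elim id (fun j => Sum.inl (c j)))).Realize (Sum.elim Subtype.val e₀)} := by
    ext c; simp only [solSet, Set.mem_setOf_eq, Language.Formula.realize_relabel, key]
  have that : solSet N (Sum.elim Subtype.val e₀') ψ = {c : α → N |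
      (ψ.relabel (Sum.elim id (fun j => Sum.inl (c j)))).Realize (Sum.elim Subtype.val e₀')} := by
    ext c; simp only [solSet, Set.mem_setOf_eq, Language.Formula.realize_relabel, key]
  rw [Set.mem_setOf_eq, Set.mem_setOf_eq, this, that]
  have : ∀ c : α → N, ((ψ.relabel (Sum.elim id (fun j => Sum.inl (c j)))).Realize
      (Sum.elim (Subtype.val : N → M') e₀) ↔ (ψ.relabel (Sum.elim id (fun j => Sum.inl (c j)))).Realize
      (Sum.elim (Subtype.val : N → M') e₀')) := fun c => hst _
  simp only [this]

lemma pairQ {U : Ultrafilter (α → N)} {γ₀ : Type u} {e₀ e₀' : γ₀ → M'} {b b' : α → M'}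
    (hst : SameType L' M' (Sum.elim (Subtype.val : N → M') e₀) (Sum.elim Subtype.val e₀'))
    (hb : RealQ N U (Sum.elim (Subtype.val : N → M') e₀) b)
    (hb' : RealQ N U (Sum.elim (Subtype.val : N → M') e₀') b') :
    SameType L' M' (Sum.elim (Sum.elim (Subtype.val : N → M') e₀) b)
      (Sum.elim (Sum.elim (Subtype.val : N → M') e₀') b') := fun ψ =>
  (hb ψ).trans ((QQ.invariance N hst ψ).trans (hb' ψ).symm)


open FirstOrder.Language in
lemma exists_witness [Nonempty N] {a : α → M'} (ψ : L'.Formula (N ⊕ α))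
    (h : ψ.Realize (Sum.elim (Subtype.val : N → M') a)) :
    ∃ c : α → N, ψ.Realize (Sum.elim (Subtype.val : N → M') (fun j => ((c j : M')))) := by
  classical
  -- restrict to free variables
  set s : Set ((N : Type u) ⊕ α) := ↑(ψ.freeVarFinset) with hs
  have hsub : ↑(ψ.freeVarFinset) ⊆ s := subset_of_eq hs.symm
  set ψ' : L'.Formula s := ψ.restrictFreeVar (Set.inclusion hsub) with hψ'
  have hre : ∀ v : (N ⊕ α) → M', ψ'.Realize (v ∘ (↑)) ↔ ψ.Realize v := by
    intro v
    exact BoundedFormula.realize_restrictFreeVar' hsub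
  -- the finite set of mentioned α-variables
  set γf : Type u := {j : α // Sum.inr j ∈ ψ.freeVarFinset} with hγf
  haveI : Finite γf := by
    refine Finite.of_injective (fun j : γf => (⟨Sum.inr j.1, j.2⟩ : (ψ.freeVarFinset : Set (N ⊕ α)))) ?_
    rintro ⟨x, hx⟩ ⟨y, hy⟩ hxy
    simp only [Subtype.mk.injEq, Sum.inr.injEq] at hxy
    exact Subtype.ext hxy
  set f : s → (N : Type u) ⊕ γf := fun x =>
    match x with
    | ⟨Sum.inl n, _⟩ => Sum.inl n
    | ⟨Sum.inr j, hj⟩ => Sum.inr ⟨j, hj⟩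
    with hf
  set θ : L'.Formula N := (ψ'.relabel f).iExs γf with hθ
  -- θ holds in M' at the canonical assignment
  have hθM : θ.Realize (Subtype.val : N → M') := by
    rw [hθ, Formula.realize_iExs]
    refine ⟨fun y : γf => a y.1, ?_⟩
    rw [Formula.realize_relabel]
    have : (fun x : s => Sum.elim (Subtype.val : N → M')
        (fun y : γf => a y.1) (f x))
        = (Sum.elim (Subtype.val : N → M') a) ∘ (↑) := by
      funext x
      rcases x with ⟨z, hz⟩
      rcases z with n | j <;> rfl
    rw [Function.comp_def, this, hre]
    exact h
  -- transfer to N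
  have hθN : θ.Realize (id : N → N) := (N.subtype.map_formula θ (id : N → N)).1 hθM
  rw [Formula.realize_iExs] at hθN
  obtain ⟨i, hi⟩ := hθN
  rw [Formula.realize_relabel] at hi
  -- transfer back to M'
  have hi' : ψ'.Realize ((Subtype.val : N → M') ∘ fun x => Sum.elim id i (f x)) :=
    (N.subtype.map_formula ψ' _).2 hi
  set c : α → N := fun j => if hj : Sum.inr j ∈ ψ.freeVarFinset then i ⟨j, hj⟩
    else Classical.arbitrary N with hc
  refine ⟨c, ?_⟩
  rw [← hre]
  have : ((Subtype.val : N → M') ∘ fun x => Sum.elim id i (f x))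
      = (Sum.elim (Subtype.val : N → M') (fun j => ((c j : M')))) ∘ (↑) := by
    funext x
    rcases x with ⟨z, hz⟩
    rcases z with n | j
    · rfl
    · have hj : Sum.inr j ∈ ψ.freeVarFinset := hz
      simp only [Function.comp_apply, Sum.elim_inr, hc]
      rw [dif_pos hj]
      rfl
  rw [← this]
  exact hi'


open FirstOrder.Language in
lemma exists_ultra [Nonempty N] (a : α → M') :
    ∃ U : Ultrafilter (α → N), ∀ ψ : L'.Formula (N ⊕ α),
      ψ.Realize (Sum.elim (Subtype.val : N → M') a) → ψ ∈ QQ N U Subtype.val := by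
  classical
  set P : Set (L'.Formula (N ⊕ α)) := {ψ | ψ.Realize (Sum.elim (Subtype.val : N → M') a)} with hP
  set F : Filter (α → N) := ⨅ ψ : P, Filter.principal (solSet N Subtype.val ψ.1) with hF
  have hdir : Directed (· ≥ ·) (fun ψ : P => Filter.principal (solSet N Subtype.val ψ.1)) := by
    rintro ⟨ψ₁, h₁⟩ ⟨ψ₂, h₂⟩
    refine ⟨⟨ψ₁ ⊓ ψ₂, ?_⟩, ?_, ?_⟩
    · simp only [hP, Set.mem_setOf_eq] at h₁ h₂ ⊢
      rw [Formula.realize_inf]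
      exact ⟨h₁, h₂⟩
    · refine Filter.principal_mono.2 ?_
      intro c hc
      simp only [solSet, Set.mem_setOf_eq, Formula.realize_inf] at hc ⊢
      exact hc.1
    · refine Filter.principal_mono.2 ?_
      intro c hc
      simp only [solSet, Set.mem_setOf_eq, Formula.realize_inf] at hc ⊢
      exact hc.2
  haveI : Nonempty (α → N) := inferInstance
  haveI hne : F.NeBot := by
    refine Filter.iInf_neBot_of_directed hdir ?_
    rintro ⟨ψ, hψ⟩
    rw [Filter.principal_neBot_iff]
    obtain ⟨c, hc⟩ := exists_witness N ψ hψ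
    exact ⟨c, hc⟩
  refine ⟨Ultrafilter.of F, ?_⟩
  intro ψ hψ
  have h1 : solSet N Subtype.val ψ ∈ F := by
    have : F ≤ Filter.principal (solSet N Subtype.val ψ) := iInf_le (fun ψ : P => Filter.principal (solSet N Subtype.val ψ.1)) ⟨ψ, hψ⟩
    exact this (Filter.mem_principal_self _)
  exact Ultrafilter.of_le F h1

lemma mk_sum_lt {κ : Cardinal.{u}} (hκ : ℵ₀ ≤ κ) {A B : Type u} (hA : #A < κ) (hB : #B < κ) :
    #(A ⊕ B) < κ := by
  rw [Cardinal.mk_sum, Cardinal.lift_id, Cardinal.lift_id]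
  exact Cardinal.add_lt_of_lt hκ hA hB

lemma mk_prod_lt {κ : Cardinal.{u}} (hκ : ℵ₀ ≤ κ) {A B : Type u} (hA : #A < κ) (hB : #B < κ) :
    #(A × B) < κ := by
  rw [Cardinal.mk_prod, Cardinal.lift_id, Cardinal.lift_id]
  exact Cardinal.mul_lt_of_lt hκ hA hB

/-- The parameter tuple used at stage `i` of the construction. -/
def seqE {ι : Type u} [LT ι] (a0 a1 : α → M') (g : ι → α → M') (i : ι) :
    ((N : Type u) ⊕ (α ⊕ (α ⊕ ({j : ι // j < i} × α)))) → M' :=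
  Sum.elim Subtype.val (Sum.elim a0 (Sum.elim a1 (fun p => g p.1.1 p.2)))

/-- The transfinite sequence of realizations. -/
noncomputable def seqG {ι : Type u} [LinearOrder ι] [WellFoundedLT ι] (a0 a1 : α → M')
    (pick : ∀ (i : ι), (((N : Type u) ⊕ (α ⊕ (α ⊕ ({j : ι // j < i} × α)))) → M') → (α → M')) :
    ι → α → M' :=
  (IsWellFounded.wf (r := ((· < ·) : ι → ι → Prop))).fix fun i rec =>
    pick i (Sum.elim Subtype.val (Sum.elim a0 (Sum.elim a1 (fun p => rec p.1.1 p.1.2 p.2))))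

lemma seqG_eq {ι : Type u} [LinearOrder ι] [WellFoundedLT ι] (a0 a1 : α → M')
    (pick : ∀ (i : ι), (((N : Type u) ⊕ (α ⊕ (α ⊕ ({j : ι // j < i} × α)))) → M') → (α → M'))
    (i : ι) :
    seqG N a0 a1 pick i = pick i (seqE N a0 a1 (seqG N a0 a1 pick) i) := by
  rw [seqG, WellFounded.fix_eq]
  rfl

end Aux

/-- If an ultraimaginary `a_E` is bounded over a small elementary
submodel `N` of the monster, then it is definable over `N` (every automorphism
fixing `N` pointwise fixes `a_E`). -/

theorem statement_0 (L : FirstOrder.Language.{u, u}) (M : Type u) [L.Structure M]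
    (κbar : Cardinal.{u}) (_mon : Monster L M κbar)
    (N : L.ElementarySubstructure M) (hN : #(N : Set M) < κbar)
    {α : Type u} (hα : #α < κbar) (E : IER L M α) (a : α → M)
    (hbdd : BddU L M κbar (autSet L M (N : Set M)) E a) :
    ∀ σ ∈ autSet L M (N : Set M), E.rel a (⇑σ ∘ a) := by
  classical
  intro σ hσ
  rcases isEmpty_or_nonempty α with hα0 | hα0
  · have : ⇑σ ∘ a = a := by funext j; exact (hα0.false j).elim
    rw [this]
    exact E.equiv.refl a
  haveI : Nonempty M := ⟨a (Classical.arbitrary α)⟩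
  haveI hNne : Nonempty N := inferInstance
  have hκℵ : ℵ₀ ≤ κbar := _mon.isRegular.aleph0_le
  have hN' : #(N : Type u) < κbar := hN
  -- the coheir ultrafilter
  obtain ⟨U, hU⟩ := exists_ultra N a
  have hRa : RealQ N U (Subtype.val : N → M) a := by
    refine RealQ.of_forward N ?_
    intro ψ hψ
    by_contra hn
    have h2 : ψ.not ∈ QQ N U (Subtype.val : N → M) :=
      hU ψ.not (by rw [Language.Formula.realize_not]; exact hn)
    exact (not_mem_QQ N).1 h2 hψ
  -- σ ∘ a has the same type over N as a
  have hstσ : SameType L M (Sum.elim (Subtype.val : N → M) a)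
      (Sum.elim (Subtype.val : N → M) (⇑σ ∘ a)) := by
    intro φ
    have h1 := σ.toElementaryEmbedding.map_formula φ (Sum.elim (Subtype.val : N → M) a)
    have h2 : (⇑σ.toElementaryEmbedding ∘ Sum.elim (Subtype.val : N → M) a)
        = Sum.elim (Subtype.val : N → M) (⇑σ ∘ a) := by
      funext z
      rcases z with x | y
      · exact hσ x.1 x.2
      · rfl
    rw [h2] at h1
    exact h1.symm
  have hRσa : RealQ N U (Subtype.val : N → M) (⇑σ ∘ a) :=
    fun ψ => (hstσ ψ).symm.trans (hRa ψ)
  -- the index order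
  obtain ⟨S, hS, hcov⟩ := hbdd
  set μ : Cardinal.{u} := #S + ℵ₀ with hμdef
  have hμ : μ < κbar := Cardinal.add_lt_of_lt hκℵ hS _mon.aleph0_lt
  set ι : Type u := (Order.succ μ).ord.ToType with hιdef
  have hι : #ι = Order.succ μ := Cardinal.mk_ord_toType _
  have hικ : #ι < κbar := by
    rw [hι]
    exact lt_of_le_of_lt (Order.succ_le_of_lt (Cardinal.cantor μ)) (_mon.strongLimit μ hμ)
  have hSι : #S < #ι := by
    rw [hι]
    exact lt_of_le_of_lt (self_le_add_right _ _) (Order.lt_succ μ)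
  -- realizing the coheir over small parameter sets
  have hpick : ∀ (i : ι) (e : ((N : Type u) ⊕ (α ⊕ (α ⊕ ({j : ι // j < i} × α)))) → M),
      ∃ b : α → M, ∀ ψ ∈ QQ N U e, ψ.Realize (Sum.elim e b) := by
    intro i e
    have hcard : #((N : Type u) ⊕ (α ⊕ (α ⊕ ({j : ι // j < i} × α)))) < κbar := by
      refine mk_sum_lt hκℵ hN' (mk_sum_lt hκℵ hα (mk_sum_lt hκℵ hα (mk_prod_lt hκℵ ?_ hα)))
      exact lt_of_le_of_lt (Cardinal.mk_subtype_le _) hικ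
    refine _mon.saturated _ α hcard hα e (QQ N U e) ?_
    intro s hs
    have hT : (⋂ ψ ∈ s, solSet N e ψ) ∈ U := by
      refine (Filter.biInter_finset_mem s).2 ?_
      intro ψ hψ
      exact hs hψ
    obtain ⟨c, hc⟩ := Ultrafilter.nonempty_of_mem hT
    refine ⟨fun j => (c j : M), ?_⟩
    intro φ hφ
    simp only [Set.mem_iInter] at hc
    exact hc φ hφ
  choose pick hpick' using hpick
  set g : ι → α → M := seqG N a (⇑σ ∘ a) pick with hgdef
  have hg : ∀ i : ι, ∀ ψ ∈ QQ N U (seqE N a (⇑σ ∘ a) g i),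
      ψ.Realize (Sum.elim (seqE N a (⇑σ ∘ a) g i) (g i)) := by
    intro i
    have h1 := hpick' i (seqE N a (⇑σ ∘ a) g i)
    have h2 : pick i (seqE N a (⇑σ ∘ a) g i) = g i := (seqG_eq N a (⇑σ ∘ a) pick i).symm
    rwa [h2] at h1
  have hRg : ∀ i : ι, RealQ N U (seqE N a (⇑σ ∘ a) g i) (g i) :=
    fun i => RealQ.of_forward N (hg i)
  -- restrictions of the full realization facts
  have hRν : ∀ i : ι, RealQ N U (Subtype.val : N → M) (g i) := by
    intro i
    have h1 := RealQ.restrict N (hRg i)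
      (Sum.inl : ↥N → (↥N ⊕ (α ⊕ (α ⊕ ({j : ι // j < i} × α)))))
    have h2 : seqE N a (⇑σ ∘ a) g i ∘
        (Sum.inl : ↥N → (↥N ⊕ (α ⊕ (α ⊕ ({j : ι // j < i} × α)))))
        = (Subtype.val : N → M) := by funext x; rfl
    rwa [h2] at h1
  have hRa_gj : ∀ j : ι, RealQ N U (Sum.elim (Subtype.val : N → M) a) (g j) := by
    intro j
    have h1 := RealQ.restrict N (hRg j)
      (Sum.elim Sum.inl (fun y : α => Sum.inr (Sum.inl y)))
    have h2 : seqE N a (⇑σ ∘ a) g j ∘ (Sum.elim Sum.inl (fun y : α => Sum.inr (Sum.inl y)))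
        = Sum.elim (Subtype.val : N → M) a := by
      funext z; rcases z with x | y <;> rfl
    rwa [h2] at h1
  have hRσa_gj : ∀ j : ι, RealQ N U (Sum.elim (Subtype.val : N → M) (⇑σ ∘ a)) (g j) := by
    intro j
    have h1 := RealQ.restrict N (hRg j)
      (Sum.elim Sum.inl (fun y : α => Sum.inr (Sum.inr (Sum.inl y))))
    have h2 : seqE N a (⇑σ ∘ a) g j ∘
        (Sum.elim Sum.inl (fun y : α => Sum.inr (Sum.inr (Sum.inl y))))
        = Sum.elim (Subtype.val : N → M) (⇑σ ∘ a) := by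
      funext z; rcases z with x | y <;> rfl
    rwa [h2] at h1
  have hRgi_gj : ∀ i j : ι, i < j → RealQ N U (Sum.elim (Subtype.val : N → M) (g i)) (g j) := by
    intro i j hij
    have h1 := RealQ.restrict N (hRg j)
      (Sum.elim Sum.inl (fun y : α => Sum.inr (Sum.inr (Sum.inr (⟨⟨i, hij⟩, y⟩)))))
    have h2 : seqE N a (⇑σ ∘ a) g j ∘
        (Sum.elim Sum.inl (fun y : α => Sum.inr (Sum.inr (Sum.inr (⟨⟨i, hij⟩, y⟩)))))
        = Sum.elim (Subtype.val : N → M) (g i) := by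
      funext z; rcases z with x | y <;> rfl
    rwa [h2] at h1
  -- same types over N
  have hst_a : ∀ i : ι, SameType L M (Sum.elim (Subtype.val : N → M) a)
      (Sum.elim (Subtype.val : N → M) (g i)) :=
    fun i ψ => (hRa ψ).trans ((hRν i) ψ).symm
  have hst_σa : ∀ i : ι, SameType L M (Sum.elim (Subtype.val : N → M) (⇑σ ∘ a))
      (Sum.elim (Subtype.val : N → M) (g i)) :=
    fun i ψ => (hRσa ψ).trans ((hRν i) ψ).symm
  -- every g i is conjugate to a over N, hence its class is covered by S
  have hcls : ∀ i : ι, ∃ s ∈ S, E.rel (g i) s := by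
    intro i
    have hcard : #((N : Type u) ⊕ α) < κbar := mk_sum_lt hκℵ hN' hα
    obtain ⟨τ, hτ⟩ := _mon.homog ((N : Type u) ⊕ α) _ _ hcard (hst_a i)
    have hτN : τ ∈ autSet L M (N : Set M) := by
      intro x hx
      exact hτ (Sum.inl ⟨x, hx⟩)
    obtain ⟨s, hsS, hrel⟩ := hcov τ hτN
    have hτa : ⇑τ ∘ a = g i := funext fun y => hτ (Sum.inr y)
    exact ⟨s, hsS, hτa ▸ hrel⟩
  choose sfun hsS hrel using hcls
  -- pigeonhole
  have hninj : ¬ Function.Injective (fun i : ι => (⟨sfun i, hsS i⟩ : S)) := by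
    intro hinj
    exact absurd (Cardinal.mk_le_of_injective hinj) (not_le.2 hSι)
  rw [Function.not_injective_iff] at hninj
  obtain ⟨i₀, j₀, hval, hne⟩ := hninj
  have hsij : sfun i₀ = sfun j₀ := congrArg Subtype.val hval
  have hgij₀ : E.rel (g i₀) (g j₀) :=
    E.equiv.trans (hrel i₀) (hsij ▸ E.equiv.symm (hrel j₀))
  obtain ⟨i, j, hij, hgij⟩ : ∃ i j : ι, i < j ∧ E.rel (g i) (g j) := by
    rcases lt_or_gt_of_ne hne with h | h
    · exact ⟨i₀, j₀, h, hgij₀⟩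
    · exact ⟨j₀, i₀, h, E.equiv.symm hgij₀⟩
  -- the two pair lemmas
  have h1 := pairQ N (hst_a i) (hRa_gj j) (hRgi_gj i j hij)
  have h2 := pairQ N (hst_σa i) (hRσa_gj j) (hRgi_gj i j hij)
  -- forget the N-coordinates
  have hm : ∀ x : α → M, (Sum.elim (Sum.elim (Subtype.val : N → M) x) (g j)) ∘
      (Sum.elim (fun y : α => Sum.inl (Sum.inr y)) (Sum.inr : α → _))
      = Sum.elim x (g j) := by
    intro x; funext z; rcases z with y | y <;> rfl
  have h1' := h1.comp (L := L) (M := M) (Sum.elim (fun y : α => Sum.inl (Sum.inr y)) Sum.inr)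
  have h2' := h2.comp (L := L) (M := M) (Sum.elim (fun y : α => Sum.inl (Sum.inr y)) Sum.inr)
  rw [hm a, hm (g i)] at h1'
  rw [hm (⇑σ ∘ a), hm (g i)] at h2'
  have hEa : E.rel a (g j) := (E.invariant a (g j) (g i) (g j) h1').2 hgij
  have hEσ : E.rel (⇑σ ∘ a) (g j) := (E.invariant (⇑σ ∘ a) (g j) (g i) (g j) h2').2 hgij
  exact E.equiv.trans hEa (E.equiv.symm hEσ)

end BddUltra
end

section
/- For any ultraimaginaries a_E and b_F, the following are equivalent: (1) b_F ∉ bddᵘ(a_E); (2) there is an a-indiscernible sequence (b_i)_{i<ω} such that b_0 ≡_{a_E} b (i.e., σ·b = b_0 for some σ ∈ Aut(𝕄/a_E)) and ¬(b_i F b_j) for all i < j < ω; (3) the orbit Aut(𝕄/a_E)·b_F has cardinality greater than 2^{|ab|+|T|}. -/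
open FirstOrder Cardinal

universe u v w

namespace BddUltra

variable (L : FirstOrder.Language.{u, u}) (M : Type u) [L.Structure M]

section Aux

variable {L : FirstOrder.Language.{u, u}} {M : Type u} [L.Structure M]

private lemma realize_comp_equiv (σ : M ≃[L] M) {γ : Type v} (φ : L.Formula γ) (v : γ → M) :
    φ.Realize (⇑σ ∘ v) ↔ φ.Realize v :=
  Language.StrongHomClass.realize_formula σ φ

private lemma mul_apply' (τ σ : M ≃[L] M) (x : M) : (τ * σ) x = τ (σ x) := rfl

private lemma one_apply' (x : M) : (1 : M ≃[L] M) x = x := rfl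

private lemma one_mem_autU {α : Type u} (E : IER L M α) (a : α → M) :
    (1 : M ≃[L] M) ∈ autU L M E a := by
  show E.rel a (⇑(1 : M ≃[L] M) ∘ a)
  have : ⇑(1 : M ≃[L] M) ∘ a = a := funext fun i => rfl
  rw [this]; exact E.equiv.refl a

private lemma mul_mem_autU {α : Type u} {E : IER L M α} {a : α → M} {τ σ : M ≃[L] M}
    (hτ : ∀ i, τ (a i) = a i) (hσ : σ ∈ autU L M E a) : (τ * σ) ∈ autU L M E a := by
  show E.rel a (⇑(τ * σ) ∘ a)
  have hσ' : E.rel a (⇑σ ∘ a) := hσ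
  have hst : SameType L M (Sum.elim a (⇑σ ∘ a)) (Sum.elim a (⇑(τ * σ) ∘ a)) := by
    intro φ
    have h := realize_comp_equiv τ φ (Sum.elim a (⇑σ ∘ a))
    have he : ⇑τ ∘ Sum.elim a (⇑σ ∘ a) = Sum.elim a (⇑(τ * σ) ∘ a) := by
      funext x; cases x with
      | inl i => exact hτ i
      | inr i => rfl
    rw [he] at h
    exact h.symm
  exact (E.invariant a (⇑σ ∘ a) a (⇑(τ * σ) ∘ a) hst).mp hσ'

private lemma cardT_infinite : ℵ₀ ≤ cardT L := le_add_self

private lemma card_formula_le (γ : Type u) :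
    #(L.Formula γ) ≤ max ℵ₀ (#γ + L.card) := by
  have hinj : Function.Injective (fun φ : L.Formula γ => (⟨0, φ⟩ : Σ n, L.BoundedFormula γ n)) := by
    intro φ ψ h
    simpa using h
  refine (Cardinal.mk_le_of_injective hinj).trans ?_
  have := Language.BoundedFormula.card_le (L := L) (α := γ)
  simpa using this

private lemma succ_lt_of_monster {κbar c : Cardinal.{u}} (mon : ∀ ρ : Cardinal.{u}, ρ < κbar → 2 ^ ρ < κbar)
    (hc : c < κbar) : Order.succ c < κbar :=
  lt_of_le_of_lt (Order.succ_le_of_lt (Cardinal.cantor c)) (mon c hc)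

/-- Pulling a `SameTypeOver (Set.range a)` fact down to formulas with `a`-parameters. -/
private lemma sameTypeOver_range_pull {α : Type u} {δ : Type u} (a : α → M) {x y : δ → M}
    (h : SameTypeOver L M (Set.range a) x y) (φ : L.Formula (α ⊕ δ)) :
    φ.Realize (Sum.elim a x) ↔ φ.Realize (Sum.elim a y) := by
  have := h (φ.relabel (Sum.map (fun i => ⟨a i, Set.mem_range_self i⟩) id))
  rw [Language.Formula.realize_relabel, Language.Formula.realize_relabel] at this
  have hx : ∀ z : δ → M,
      (Sum.elim (Subtype.val : ↥(Set.range a) → M) z) ∘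
        (Sum.map (fun i => (⟨a i, Set.mem_range_self i⟩ : ↥(Set.range a))) id) = Sum.elim a z := by
    intro z; funext w; cases w with
    | inl i => rfl
    | inr i => rfl
  rw [hx x, hx y] at this
  exact this

private lemma strictMono_pair {i j : ℕ} (hij : i < j) : StrictMono (![i, j] : Fin 2 → ℕ) := by
  intro x y hxy
  fin_cases x <;> fin_cases y <;> first
    | (exact absurd hxy (by omega))
    | simpa using hij
    | (exact absurd hxy (by decide))

private lemma strictMono_single (i : ℕ) : StrictMono (![i] : Fin 1 → ℕ) := by
  intro x y hxy
  exact absurd hxy (by omega)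

/-- Transfer of pair types along an indiscernible sequence. -/
private lemma indisc_pair {α β : Type u} {a : α → M} {bi : ℕ → β → M}
    (hind : IndiscOver L M (Set.range a) bi) {i j k l : ℕ} (hij : i < j) (hkl : k < l)
    (φ : L.Formula (α ⊕ (β ⊕ β))) :
    (φ.Realize (Sum.elim a (Sum.elim (bi i) (bi j))) ↔
      φ.Realize (Sum.elim a (Sum.elim (bi k) (bi l)))) := by
  have h2 := hind 2 ![i, j] ![k, l] (strictMono_pair hij) (strictMono_pair hkl)
  have h3 := sameTypeOver_range_pull a h2 (φ.relabel (Sum.map id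
    (Sum.elim (fun b => ((0 : Fin 2), b)) (fun b => ((1 : Fin 2), b)))))
  rw [Language.Formula.realize_relabel, Language.Formula.realize_relabel] at h3
  have hx : ∀ s : Fin 2 → ℕ,
      (Sum.elim a (flatten M bi s)) ∘ (Sum.map id
        (Sum.elim (fun b => ((0 : Fin 2), b)) (fun b => ((1 : Fin 2), b)))) =
      Sum.elim a (Sum.elim (bi (s 0)) (bi (s 1))) := by
    intro s; funext w
    rcases w with i | b
    · rfl
    · rcases b with b | b <;> rfl
  rw [hx (![i, j] : Fin 2 → ℕ), hx (![k, l] : Fin 2 → ℕ)] at h3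
  simpa using h3

/-- Transfer of 1-types along an indiscernible sequence. -/
private lemma indisc_single {α β : Type u} {a : α → M} {bi : ℕ → β → M}
    (hind : IndiscOver L M (Set.range a) bi) (i j : ℕ)
    (φ : L.Formula (α ⊕ β)) :
    (φ.Realize (Sum.elim a (bi i)) ↔ φ.Realize (Sum.elim a (bi j))) := by
  have h2 := hind 1 ![i] ![j] (strictMono_single i) (strictMono_single j)
  have h3 := sameTypeOver_range_pull a h2 (φ.relabel (Sum.map id (fun b => ((0 : Fin 1), b))))
  rw [Language.Formula.realize_relabel, Language.Formula.realize_relabel] at h3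
  have hx : ∀ s : Fin 1 → ℕ,
      (Sum.elim a (flatten M bi s)) ∘ (Sum.map id (fun b => ((0 : Fin 1), b))) =
      Sum.elim a (bi (s 0)) := by
    intro s; funext w
    rcases w with i | b <;> rfl
  rw [hx (![i] : Fin 1 → ℕ), hx (![j] : Fin 1 → ℕ)] at h3
  simpa using h3

set_option maxHeartbeats 1000000 in
/-- Stretching an indiscernible witness sequence to any small length, giving a lower bound
on the orbit cardinality. -/
private lemma orbit_ge {κbar : Cardinal.{u}} (mon : Monster L M κbar)
    {α β : Type u} (hα : #α < κbar) (hβ : #β < κbar)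
    (E : IER L M α) (a : α → M) (F : IER L M β) (b : β → M)
    (bi : ℕ → β → M) (hind : IndiscOver L M (Set.range a) bi)
    (σ0 : M ≃[L] M) (hσ0 : σ0 ∈ autU L M E a) (hσ0b : ∀ i, σ0 (b i) = bi 0 i)
    (hF : ∀ i j : ℕ, i < j → ¬ F.rel (bi i) (bi j))
    (ρ : Cardinal.{u}) (hρ : ρ < κbar) :
    ρ ≤ orbitCard L M (autU L M E a) F b := by
  classical
  by_cases hρ1 : ρ ≤ 1
  · refine hρ1.trans (Cardinal.one_le_iff_ne_zero.mpr (Cardinal.mk_ne_zero_iff.mpr ?_))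
    exact ⟨⟨_, ⟨⟨1, one_mem_autU E a⟩, rfl⟩⟩⟩

  push_neg at hρ1
  set ι := ρ.ord.ToType with hιdef
  have hι : #ι = ρ := by rw [hιdef, Cardinal.mk_toType, Cardinal.card_ord]
  have hnt : Nontrivial ι := Cardinal.one_lt_iff_nontrivial.mp (by rwa [hι])
  have hne : Nonempty ι := hnt.to_nonempty
  -- the scheme of formulas expressing that all increasing pairs realize `tp(bi 0, bi 1 / a)`
  set p : Set (L.Formula (α ⊕ (ι × β))) :=
    {ψ | ∃ x y : ι, x < y ∧ ∃ φ : L.Formula (α ⊕ (β ⊕ β)),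
      φ.Realize (Sum.elim a (Sum.elim (bi 0) (bi 1))) ∧
      ψ = φ.relabel (Sum.map id (Sum.elim (fun w => (x, w)) (fun w => (y, w))))} with hpdef
  have hcard2 : #(ι × β) < κbar := by
    rw [Cardinal.mk_prod, Cardinal.lift_id, Cardinal.lift_id, hι]
    exact Cardinal.mul_lt_of_lt mon.isRegular.aleph0_le hρ hβ
  have hcomp : ∀ (x y : ι) (cc : ι × β → M),
      (Sum.elim a cc) ∘ (Sum.map id (Sum.elim (fun w => (x, w)) (fun w => (y, w)))) =
        Sum.elim a (Sum.elim (fun w => cc (x, w)) (fun w => cc (y, w))) := by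
    intro x y cc; funext z
    rcases z with i | (w | w) <;> rfl
  have hfinsat : ∀ s : Finset (L.Formula (α ⊕ (ι × β))), ↑s ⊆ p →
      ∃ cc : ι × β → M, ∀ ψ ∈ s, ψ.Realize (Sum.elim a cc) := by
    intro s hs
    have hdata : ∀ ψ ∈ s, ∃ x y : ι, x < y ∧ ∃ φ : L.Formula (α ⊕ (β ⊕ β)),
        φ.Realize (Sum.elim a (Sum.elim (bi 0) (bi 1))) ∧
        ψ = φ.relabel (Sum.map id (Sum.elim (fun w => (x, w)) (fun w => (y, w)))) :=
      fun ψ h => hs h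
    choose! xf yf hlt φf hreal heq using hdata
    set K : Finset ι := s.biUnion (fun ψ => {xf ψ, yf ψ}) with hKdef
    set iso := K.orderIsoOfFin rfl with hisodef
    set rank : ι → ℕ := fun z => if h : z ∈ K then ((iso.symm ⟨z, h⟩ : Fin K.card) : ℕ) else 0
      with hrankdef
    have hrank : ∀ ψ ∈ s, rank (xf ψ) < rank (yf ψ) := by
      intro ψ hψ
      have hxK : xf ψ ∈ K := Finset.mem_biUnion.mpr ⟨ψ, hψ, by simp⟩
      have hyK : yf ψ ∈ K := Finset.mem_biUnion.mpr ⟨ψ, hψ, by simp⟩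
      have : iso.symm ⟨xf ψ, hxK⟩ < iso.symm ⟨yf ψ, hyK⟩ :=
        iso.symm.strictMono (Subtype.mk_lt_mk.mpr (hlt ψ hψ))
      simp only [hrankdef, dif_pos hxK, dif_pos hyK]
      exact this
    refine ⟨fun q => bi (rank q.1) q.2, ?_⟩
    intro ψ hψ
    rw [heq ψ hψ, Language.Formula.realize_relabel, hcomp]
    exact (indisc_pair hind Nat.zero_lt_one (hrank ψ hψ) (φf ψ)).mp (hreal ψ hψ)
  obtain ⟨c, hc⟩ := mon.saturated α (ι × β) hα hcard2 a p hfinsat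
  have hpair : ∀ x y : ι, x < y → ∀ φ : L.Formula (α ⊕ (β ⊕ β)),
      (φ.Realize (Sum.elim a (Sum.elim (bi 0) (bi 1))) ↔
        φ.Realize (Sum.elim a (Sum.elim (fun w => c (x, w)) (fun w => c (y, w))))) := by
    intro x y hxy φ
    constructor
    · intro h
      have := hc _ (⟨x, y, hxy, φ, h, rfl⟩ : _ ∈ p)
      rwa [Language.Formula.realize_relabel, hcomp] at this
    · intro h
      by_contra hnot
      have hmem : φ.not.relabel (Sum.map id
          (Sum.elim (fun w => (x, w)) (fun w => (y, w)))) ∈ p :=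
        ⟨x, y, hxy, φ.not, Language.Formula.realize_not.mpr hnot, rfl⟩
      have := hc _ hmem
      rw [Language.Formula.realize_relabel, hcomp, Language.Formula.realize_not] at this
      exact this h
  have hsingle : ∀ x : ι, ∀ φ : L.Formula (α ⊕ β),
      (φ.Realize (Sum.elim a (bi 0)) ↔ φ.Realize (Sum.elim a (fun w => c (x, w)))) := by
    intro x φ
    obtain ⟨y, hyx⟩ := exists_ne x
    have hfst : ∀ (u v : β → M), (Sum.elim a (Sum.elim u v)) ∘ (Sum.map id Sum.inl)
        = Sum.elim a u := by intro u v; funext z; rcases z with i | w <;> rfl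
    have hsnd : ∀ (u v : β → M), (Sum.elim a (Sum.elim u v)) ∘ (Sum.map id Sum.inr)
        = Sum.elim a v := by intro u v; funext z; rcases z with i | w <;> rfl
    rcases lt_or_gt_of_ne hyx with hlt | hlt
    · -- y < x : use the pair (y, x), second coordinate
      have h1 := hpair y x hlt (φ.relabel (Sum.map id Sum.inr))
      rw [Language.Formula.realize_relabel, Language.Formula.realize_relabel,
        hsnd, hsnd] at h1
      exact (indisc_single hind 0 1 φ).trans h1
    · -- x < y : use the pair (x, y), first coordinate
      have h1 := hpair x y hlt (φ.relabel (Sum.map id Sum.inl))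
      rw [Language.Formula.realize_relabel, Language.Formula.realize_relabel,
        hfst, hfst] at h1
      exact h1
  have hcardαβ : #(α ⊕ β) < κbar := by
    rw [Cardinal.mk_sum, Cardinal.lift_id, Cardinal.lift_id]
    exact Cardinal.add_lt_of_lt mon.isRegular.aleph0_le hα hβ
  have hhom : ∀ x : ι, ∃ τ : M ≃[L] M,
      ∀ i, τ (Sum.elim a (bi 0) i) = Sum.elim a (fun w => c (x, w)) i :=
    fun x => mon.homog (α ⊕ β) _ _ hcardαβ (fun φ => hsingle x φ)
  choose τ hτ using hhom
  have hfix : ∀ x : ι, ∀ i, τ x (a i) = a i := fun x i => hτ x (Sum.inl i)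
  have hcx : ∀ x : ι, ⇑(τ x * σ0) ∘ b = fun w => c (x, w) := by
    intro x; funext w
    show (τ x * σ0) (b w) = c (x, w)
    rw [mul_apply', hσ0b w]
    exact hτ x (Sum.inr w)
  have hnotF : ∀ x y : ι, x < y → ¬ F.rel (fun w => c (x, w)) (fun w => c (y, w)) := by
    intro x y hxy
    have hst : SameType L M (Sum.elim (bi 0) (bi 1))
        (Sum.elim (fun w => c (x, w)) (fun w => c (y, w))) := by
      intro φ
      have := hpair x y hxy (φ.relabel Sum.inr)
      rwa [Language.Formula.realize_relabel, Language.Formula.realize_relabel,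
        Sum.elim_comp_inr, Sum.elim_comp_inr] at this
    exact fun h => hF 0 1 Nat.zero_lt_one
      ((F.invariant _ _ _ _ hst).mpr h)
  set g : ι → ↥(Set.range fun σ : ↥(autU L M E a) => Quotient.mk F.setoid (⇑σ.1 ∘ b)) :=
    fun x => ⟨Quotient.mk F.setoid (⇑(τ x * σ0) ∘ b),
      ⟨⟨τ x * σ0, mul_mem_autU (hfix x) hσ0⟩, rfl⟩⟩ with hgdef
  have hginj : Function.Injective g := by
    intro x y hxy
    by_contra hne
    have hq : Quotient.mk F.setoid (⇑(τ x * σ0) ∘ b) = Quotient.mk F.setoid (⇑(τ y * σ0) ∘ b) :=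
      congrArg Subtype.val hxy
    rw [hcx x, hcx y] at hq
    rcases lt_or_gt_of_ne hne with h | h
    · exact hnotF x y h (Quotient.exact hq)
    · exact hnotF y x h (F.equiv.symm (Quotient.exact hq))
  calc ρ = #ι := hι.symm
    _ ≤ _ := Cardinal.mk_le_of_injective hginj

/-- The set of `N`-tuples realizing `φ` with parameters `c`. -/
private def SatD {L : FirstOrder.Language.{u, u}} {M : Type u} [L.Structure M]
    {β : Type u} (NS : Set M) {γ : Type u} (c : γ → M)
    (φ : L.Formula ((↥NS ⊕ γ) ⊕ β)) : Set (β → ↥NS) :=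
  {m | φ.Realize (Sum.elim (Sum.elim Subtype.val c) (Subtype.val ∘ m))}

/-- `e` realizes the coheir type (along the ultrafilter `D`) over `N ∪ c`. -/
private def CoheirOver (L : FirstOrder.Language.{u, u}) {M : Type u} [L.Structure M]
    {β : Type u} (NS : Set M) (D : Ultrafilter (β → ↥NS)) {γ : Type u} (c : γ → M)
    (e : β → M) : Prop :=
  ∀ φ : L.Formula ((↥NS ⊕ γ) ⊕ β), SatD NS c φ ∈ D →
    φ.Realize (Sum.elim (Sum.elim Subtype.val c) e)

/-- The sequence of tuples `v` flattened as a `Fin n × β` tuple. -/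
private def hist {M : Type u} {β : Type u} (v : ℕ → β → M) (n : ℕ) : Fin n × β → M :=
  fun p => v p.1 p.2

section Coheir

variable {L : FirstOrder.Language.{u, u}} {M : Type u} [L.Structure M]
variable {β : Type u} (NS : Set M) (D : Ultrafilter (β → ↥NS))

private lemma coheir_realize_iff {γ : Type u} {c : γ → M} {e : β → M}
    (h : CoheirOver L NS D c e) (φ : L.Formula ((↥NS ⊕ γ) ⊕ β)) :
    φ.Realize (Sum.elim (Sum.elim Subtype.val c) e) ↔ SatD NS c φ ∈ D := by
  constructor
  · intro hr
    by_contra hmem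
    have hcompl : (SatD NS c φ)ᶜ ∈ D := Ultrafilter.compl_mem_iff_notMem.mpr hmem
    have hn : SatD NS c φ.not = (SatD NS c φ)ᶜ := by
      ext m; simp [SatD, Language.Formula.realize_not]
    have := h φ.not (hn ▸ hcompl)
    rw [Language.Formula.realize_not] at this
    exact this hr
  · exact h φ

private lemma coheir_mono {γ γ' : Type u} {c : γ → M} {e : β → M}
    (h : CoheirOver L NS D c e) (j : γ' → γ) : CoheirOver L NS D (c ∘ j) e := by
  intro φ hφ
  set J : (↥NS ⊕ γ') ⊕ β → (↥NS ⊕ γ) ⊕ β := Sum.map (Sum.map id j) id with hJ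
  have hco : ∀ x : β → M,
      (Sum.elim (Sum.elim Subtype.val c) x) ∘ J = Sum.elim (Sum.elim Subtype.val (c ∘ j)) x := by
    intro x; funext z; rcases z with (s | g) | bb <;> rfl
  have hsat : SatD NS c (φ.relabel J) = SatD NS (c ∘ j) φ := by
    ext m
    show (φ.relabel J).Realize _ ↔ φ.Realize _
    rw [Language.Formula.realize_relabel, hco]
  have := h (φ.relabel J) (by rw [hsat]; exact hφ)
  rwa [Language.Formula.realize_relabel, hco] at this

private lemma coheir_sameType {v w : ℕ → β → M}
    (hv : ∀ n, CoheirOver L NS D (hist v n) (v n)) (hw : ∀ n, CoheirOver L NS D (hist w n) (w n)) :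
    ∀ (n : ℕ) (φ : L.Formula (↥NS ⊕ (Fin n × β))),
      (φ.Realize (Sum.elim Subtype.val (hist v n)) ↔
        φ.Realize (Sum.elim Subtype.val (hist w n))) := by
  intro n
  induction n with
  | zero =>
    intro φ
    have hvw : hist v 0 = hist w 0 := funext fun p => p.1.elim0
    rw [hvw]
  | succ n ih =>
    intro φ
    set ρ : (↥NS ⊕ (Fin (n + 1) × β)) → ((↥NS ⊕ (Fin n × β)) ⊕ β) :=
      Sum.elim (fun x => Sum.inl (Sum.inl x))
        (fun q => if h : (q.1 : ℕ) < n then Sum.inl (Sum.inr (⟨q.1, h⟩, q.2)) else Sum.inr q.2)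
      with hρ
    have hVcomp : ∀ u : ℕ → β → M,
        (Sum.elim (Sum.elim Subtype.val (hist u n)) (u n)) ∘ ρ =
          Sum.elim Subtype.val (hist u (n + 1)) := by
      intro u; funext z
      rcases z with x | ⟨i, bb⟩
      · rfl
      · by_cases h : (i : ℕ) < n
        · simp only [hρ, Function.comp_apply, Sum.elim_inr, dif_pos h]
          rfl
        · have hi : (i : ℕ) = n := by omega
          simp only [hρ, Function.comp_apply, Sum.elim_inr, dif_neg h]
          show u n bb = hist u (n + 1) (i, bb)
          simp [hist, hi]
    have hSateq : SatD NS (hist v n) (φ.relabel ρ) = SatD NS (hist w n) (φ.relabel ρ) := by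
      ext m
      have hjco : ∀ u : ℕ → β → M,
          (Sum.elim Subtype.val (hist u n)) ∘
            (Sum.elim id (fun bb => Sum.inl (m bb)) :
              ((↥NS ⊕ (Fin n × β)) ⊕ β) → ↥NS ⊕ (Fin n × β)) =
          Sum.elim (Sum.elim Subtype.val (hist u n)) (Subtype.val ∘ m) := by
        intro u; funext z; rcases z with x | bb <;> rfl
      show (φ.relabel ρ).Realize _ ↔ (φ.relabel ρ).Realize _
      have h1 := ih ((φ.relabel ρ).relabel (Sum.elim id (fun bb => Sum.inl (m bb))))
      simp only [Language.Formula.realize_relabel] at h1 ⊢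
      rw [← hjco v, ← hjco w]
      exact h1
    have h2 := coheir_realize_iff NS D (hv n) (φ.relabel ρ)
    have h3 := coheir_realize_iff NS D (hw n) (φ.relabel ρ)
    rw [Language.Formula.realize_relabel, hVcomp v] at h2
    rw [Language.Formula.realize_relabel, hVcomp w] at h3
    rw [h2, h3, hSateq]

private lemma coheir_comp {v : ℕ → β → M}
    (hv : ∀ n, CoheirOver L NS D (hist v n) (v n)) {u : ℕ → ℕ} (hu : StrictMono u) :
    ∀ n, CoheirOver L NS D (hist (fun k => v (u k)) n) (v (u n)) := by
  intro n
  have := coheir_mono NS D (hv (u n))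
    (fun p : Fin n × β => ((⟨u p.1, hu p.1.isLt⟩ : Fin (u n)), p.2))
  exact this

private lemma coheir_of_empty {γ : Type u} [IsEmpty γ] (c : γ → M) {d : β → M}
    (hd : ∀ φ : L.Formula (↥NS ⊕ β),
      {m : β → ↥NS | φ.Realize (Sum.elim Subtype.val (Subtype.val ∘ m))} ∈ D →
      φ.Realize (Sum.elim Subtype.val d)) :
    CoheirOver L NS D c d := by
  intro φ hφ
  set j : (↥NS ⊕ γ) ⊕ β → ↥NS ⊕ β :=
    Sum.elim (Sum.elim Sum.inl (fun g => isEmptyElim g)) Sum.inr with hj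
  have hco : ∀ x : β → M, (Sum.elim Subtype.val x) ∘ j = Sum.elim (Sum.elim Subtype.val c) x := by
    intro x; funext z
    rcases z with (s | g) | bb
    · rfl
    · exact isEmptyElim g
    · rfl
  have hmem : {m : β → ↥NS |
      (φ.relabel j).Realize (Sum.elim Subtype.val (Subtype.val ∘ m))} ∈ D := by
    have : {m : β → ↥NS |
        (φ.relabel j).Realize (Sum.elim Subtype.val (Subtype.val ∘ m))} = SatD NS c φ := by
      ext m
      show (φ.relabel j).Realize _ ↔ φ.Realize _
      rw [Language.Formula.realize_relabel, hco]
    rw [this]; exact hφ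
  have := hd (φ.relabel j) hmem
  rwa [Language.Formula.realize_relabel, hco] at this

private lemma exists_coheir {κbar : Cardinal.{u}} (mon : Monster L M κbar)
    (hNS : #↥NS < κbar) (hβ : #β < κbar) {γ : Type u} (hγ : #γ < κbar) (c : γ → M) :
    ∃ e : β → M, CoheirOver L NS D c e := by
  have hcard : #(↥NS ⊕ γ) < κbar := by
    rw [Cardinal.mk_sum, Cardinal.lift_id, Cardinal.lift_id]
    exact Cardinal.add_lt_of_lt mon.isRegular.aleph0_le hNS hγ
  have hfin : ∀ s : Finset (L.Formula ((↥NS ⊕ γ) ⊕ β)), ↑s ⊆ {φ : L.Formula ((↥NS ⊕ γ) ⊕ β) | SatD NS c φ ∈ D} →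
      ∃ bb : β → M, ∀ φ ∈ s, φ.Realize (Sum.elim (Sum.elim Subtype.val c) bb) := by
    intro s hs
    have hmem : (⋂ φ ∈ s, SatD NS c φ) ∈ (D : Filter (β → ↥NS)) :=
      (Filter.biInter_finset_mem (f := (D : Filter (β → ↥NS))) s).mpr
        (fun φ hφ => hs (Finset.mem_coe.mpr hφ))
    obtain ⟨m, hm⟩ := Ultrafilter.nonempty_of_mem hmem
    exact ⟨Subtype.val ∘ m, fun φ hφ => Set.mem_iInter₂.mp hm φ hφ⟩
  obtain ⟨e, he⟩ := mon.saturated (↥NS ⊕ γ) β hcard hβ (Sum.elim Subtype.val c)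
    {φ : L.Formula ((↥NS ⊕ γ) ⊕ β) | SatD NS c φ ∈ D} hfin
  exact ⟨e, fun φ hφ => he φ hφ⟩

private lemma exists_coheir_seq {κbar : Cardinal.{u}} (mon : Monster L M κbar)
    (hNS : #↥NS < κbar) (hβ : #β < κbar) (d d' : β → M) :
    ∃ e : ℕ → β → M, ∀ n, CoheirOver L NS D
      (Sum.elim (hist e n) (Sum.elim d d') : ((Fin n × β) ⊕ (β ⊕ β)) → M) (e n) := by
  classical
  have hex : ∀ (n : ℕ) (p : Fin n → β → M), ∃ e : β → M,
      CoheirOver L NS D (Sum.elim (fun q : Fin n × β => p q.1 q.2) (Sum.elim d d')) e := by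
    intro n p
    refine exists_coheir NS D mon hNS hβ ?_ _
    have h1 : #(Fin n × β) < κbar := by
      rw [Cardinal.mk_prod, Cardinal.mk_fin, Cardinal.lift_natCast]
      simp only [Cardinal.lift_id']
      exact Cardinal.mul_lt_of_lt mon.isRegular.aleph0_le
        ((Cardinal.nat_lt_aleph0 n).trans_le mon.isRegular.aleph0_le) hβ
    have h2 : #(β ⊕ β) < κbar := by
      rw [Cardinal.mk_sum, Cardinal.lift_id]
      exact Cardinal.add_lt_of_lt mon.isRegular.aleph0_le hβ hβ
    rw [Cardinal.mk_sum, Cardinal.lift_id, Cardinal.lift_id]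
    exact Cardinal.add_lt_of_lt mon.isRegular.aleph0_le h1 h2
  choose pick hpick using hex
  let aux : ∀ n : ℕ, Fin n → β → M :=
    fun n => Nat.rec (fun i => i.elim0) (fun n p => Fin.snoc p (pick n p)) n
  have hauxsucc : ∀ n, aux (n + 1) = Fin.snoc (aux n) (pick n (aux n)) := fun n => rfl
  set e : ℕ → β → M := fun n => pick n (aux n) with hedef
  have hcoh : ∀ n i (h : i < n), aux n ⟨i, h⟩ = e i := by
    intro n
    induction n with
    | zero => intro i h; exact absurd h (Nat.not_lt_zero i)
    | succ n ih =>
      intro i h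
      rw [hauxsucc]
      rcases Nat.lt_or_ge i n with h' | h'
      · have hc : (⟨i, h⟩ : Fin (n + 1)) = Fin.castSucc ⟨i, h'⟩ := rfl
        rw [hc, Fin.snoc_castSucc]
        exact ih i h'
      · have hi : i = n := by omega
        subst hi
        have hc : (⟨i, h⟩ : Fin (i + 1)) = Fin.last i := rfl
        rw [hc, Fin.snoc_last]
  refine ⟨e, fun n => ?_⟩
  have hp := hpick n (aux n)
  have hfe : (fun q : Fin n × β => aux n q.1 q.2) = hist e n := by
    funext q
    show aux n q.1 q.2 = e (↑q.1) q.2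
    have := hcoh n (↑q.1) q.1.isLt
    rw [Fin.eta] at this
    rw [this]
  rw [hfe] at hp
  exact hp
  
private lemma exists_witness_in {L : FirstOrder.Language.{u, u}} {M : Type u} [L.Structure M]
    [Nonempty M] (Nst : L.ElementarySubstructure M) {β : Type u}
    (ψ : L.Formula (↥Nst ⊕ β)) (d : β → M)
    (h : ψ.Realize (Sum.elim (fun x : ↥Nst => (x : M)) d)) :
    ∃ m : β → ↥Nst, ψ.Realize (Sum.elim (fun x : ↥Nst => (x : M)) (fun w => ((m w : M)))) := by
  classical
  set fv := ψ.freeVarFinset with hfv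
  have hsub : ↑fv ⊆ (↑fv : Set (↥Nst ⊕ β)) := Set.Subset.rfl
  set ψ₀ := ψ.restrictFreeVar (Set.inclusion hsub) with hψ₀
  set fmap : ↥(↑fv : Set (↥Nst ⊕ β)) → ↥Nst ⊕ ↥(↑fv : Set (↥Nst ⊕ β)) :=
    fun x => Sum.elim (fun nn => Sum.inl nn) (fun _ => Sum.inr x) x.1 with hfmap
  set χ := Language.Formula.iExs (↥(↑fv : Set (↥Nst ⊕ β))) (Language.Formula.relabel fmap ψ₀) with hχ
  -- χ is realized in M with parameters from N
  have hχM : χ.Realize (fun x : ↥Nst => (x : M)) := by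
    rw [hχ, Language.Formula.realize_iExs]
    refine ⟨fun x => Sum.elim (fun nn : ↥Nst => (nn : M)) d x.1, ?_⟩
    rw [Language.Formula.realize_relabel]
    have heq : (fun a : ↥(↑fv : Set (↥Nst ⊕ β)) =>
        Sum.elim (fun nn : ↥Nst => (nn : M))
          (fun x : ↥(↑fv : Set (↥Nst ⊕ β)) => Sum.elim (fun nn : ↥Nst => (nn : M)) d x.1)
          (fmap a)) = (Sum.elim (fun nn : ↥Nst => (nn : M)) d) ∘ (Subtype.val) := by
      funext x
      rcases x with ⟨z, hz⟩
      rcases z with nn | bb <;> rfl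
    rw [Function.comp_def, heq]
    exact (Language.BoundedFormula.realize_restrictFreeVar' hsub).mpr h
  -- transfer to N and get a witness there
  have hχN : χ.Realize (id : ↥Nst → ↥Nst) := by
    have hmf := Nst.subtype.map_formula χ (id : ↥Nst → ↥Nst)
    rw [← hmf]
    exact hχM
  rw [hχ, Language.Formula.realize_iExs] at hχN
  obtain ⟨i, hi⟩ := hχN
  rw [Language.Formula.realize_relabel] at hi
  -- map the witness back to M
  have hiM := (Nst.subtype.map_formula ψ₀
    (fun a => Sum.elim (id : ↥Nst → ↥Nst) i (fmap a))).mpr hi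
  set m : β → ↥Nst := fun bb =>
    if hb : (Sum.inr bb : ↥Nst ⊕ β) ∈ fv then i ⟨Sum.inr bb, hb⟩
    else Classical.arbitrary _ with hm
  refine ⟨m, ?_⟩
  have hveq : (⇑Nst.subtype ∘ fun a => Sum.elim (id : ↥Nst → ↥Nst) i (fmap a))
      = (Sum.elim (fun nn : ↥Nst => (nn : M)) (fun w => ((m w : M)))) ∘ Subtype.val := by
    funext x
    rcases x with ⟨z, hz⟩
    rcases z with nn | bb
    · rfl
    · show (i ⟨Sum.inr bb, hz⟩ : M) = (m bb : M)
      have hz' : (Sum.inr bb : ↥Nst ⊕ β) ∈ fv := Finset.mem_coe.mp hz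
      simp [hm, hz']
  rw [hveq] at hiM
  exact (Language.BoundedFormula.realize_restrictFreeVar' hsub).mp hiM

private lemma coheir_base_iff {γ : Type u} [IsEmpty γ] {c : γ → M} {x : β → M}
    (h : CoheirOver L NS D c x) (ψ : L.Formula (↥NS ⊕ β)) :
    (ψ.Realize (Sum.elim Subtype.val x) ↔
      {m : β → ↥NS | ψ.Realize (Sum.elim Subtype.val (Subtype.val ∘ m))} ∈ D) := by
  set k : (↥NS ⊕ β) → ((↥NS ⊕ γ) ⊕ β) :=
    Sum.elim (fun z => Sum.inl (Sum.inl z)) Sum.inr with hk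
  have hco : ∀ y : β → M,
      (Sum.elim (Sum.elim Subtype.val c) y) ∘ k = Sum.elim Subtype.val y := by
    intro y; funext z; rcases z with s | bb <;> rfl
  have h1 := coheir_realize_iff NS D h (ψ.relabel k)
  rw [Language.Formula.realize_relabel, hco] at h1
  have h2 : SatD NS c (ψ.relabel k) =
      {m : β → ↥NS | ψ.Realize (Sum.elim Subtype.val (Subtype.val ∘ m))} := by
    ext m
    show (ψ.relabel k).Realize _ ↔ ψ.Realize _
    rw [Language.Formula.realize_relabel, hco]
  rw [h2] at h1
  exact h1

private lemma exists_strictMono_extension {n : ℕ} (s : Fin n → ℕ) (hs : StrictMono s) :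
    ∃ u : ℕ → ℕ, StrictMono u ∧ ∀ i : Fin n, u ↑i = s i := by
  classical
  rcases Nat.eq_zero_or_pos n with h0 | hpos
  · subst h0; exact ⟨id, strictMono_id, fun i => i.elim0⟩
  refine ⟨fun k => if h : k < n then s ⟨k, h⟩ else s ⟨n - 1, by omega⟩ + (k - (n - 1)), ?_, ?_⟩
  · intro k1 k2 hk
    by_cases h1 : k1 < n <;> by_cases h2 : k2 < n
    · simp only [dif_pos h1, dif_pos h2]
      exact hs (show (⟨k1, h1⟩ : Fin n) < ⟨k2, h2⟩ from hk)
    · simp only [dif_pos h1, dif_neg h2]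
      have hle : s ⟨k1, h1⟩ ≤ s ⟨n - 1, by omega⟩ := by
        apply hs.monotone
        show k1 ≤ n - 1
        omega
      omega
    · omega
    · simp only [dif_neg h1, dif_neg h2]
      omega
  · intro i
    simp only [dif_pos i.isLt]

private lemma coheir_indisc {g : ℕ → β → M}
    (hg : ∀ n, CoheirOver L NS D (hist g n) (g n)) :
    IndiscOver L M NS g := by
  intro n s t hs ht
  obtain ⟨us, hus, hs'⟩ := exists_strictMono_extension s hs
  obtain ⟨ut, hut, ht'⟩ := exists_strictMono_extension t ht
  have h1 := coheir_comp NS D hg hus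
  have h2 := coheir_comp NS D hg hut
  have h3 := coheir_sameType NS D h1 h2 n
  intro φ
  have hfs : hist (fun k => g (us k)) n = flatten M g s := by
    funext p
    show g (us ↑p.1) p.2 = g (s p.1) p.2
    rw [hs' p.1]
  have hft : hist (fun k => g (ut k)) n = flatten M g t := by
    funext p
    show g (ut ↑p.1) p.2 = g (t p.1) p.2
    rw [ht' p.1]
  have := h3 φ
  rwa [hfs, hft] at this

private lemma indiscOver_mono {A B : Set M} (hAB : A ⊆ B) {ι : Type v} [Preorder ι]
    {β' : Type w} {g : ι → β' → M} (h : IndiscOver L M B g) : IndiscOver L M A g := by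
  intro n s t hs ht φ
  have h1 := h n s t hs ht (φ.relabel (Sum.map (Set.inclusion hAB) id))
  rw [Language.Formula.realize_relabel, Language.Formula.realize_relabel] at h1
  have hco : ∀ x : Fin n × β' → M,
      (Sum.elim (Subtype.val : ↥B → M) x) ∘ (Sum.map (Set.inclusion hAB) id) =
        Sum.elim (Subtype.val : ↥A → M) x := by
    intro x; funext z; rcases z with y | q <;> rfl
  rw [hco, hco] at h1
  exact h1

private lemma indisc_pair_sameType {A : Set M} {g : ℕ → β → M} (hg : IndiscOver L M A g)
    {i j k l : ℕ} (hij : i < j) (hkl : k < l) :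
    SameType L M (Sum.elim (g i) (g j)) (Sum.elim (g k) (g l)) := by
  intro φ
  have h2 := hg 2 ![i, j] ![k, l] (strictMono_pair hij) (strictMono_pair hkl)
  have h3 := h2 (φ.relabel (fun z =>
    (Sum.inr (Sum.elim (fun w => ((0 : Fin 2), w)) (fun w => ((1 : Fin 2), w)) z) :
      ↥A ⊕ (Fin 2 × β))))
  rw [Language.Formula.realize_relabel, Language.Formula.realize_relabel] at h3
  have hco : ∀ s : Fin 2 → ℕ,
      ((Sum.elim (Subtype.val : ↥A → M) (flatten M g s)) ∘ (fun z =>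
        (Sum.inr (Sum.elim (fun w => ((0 : Fin 2), w)) (fun w => ((1 : Fin 2), w)) z) :
          ↥A ⊕ (Fin 2 × β)))) = Sum.elim (g (s 0)) (g (s 1)) := by
    intro s; funext z; rcases z with w | w <;> rfl
  rw [hco (![i, j] : Fin 2 → ℕ), hco (![k, l] : Fin 2 → ℕ)] at h3
  simpa using h3

end Coheir

end Aux


section Main

variable {L : FirstOrder.Language.{u, u}} {M : Type u} [L.Structure M]

set_option maxHeartbeats 1600000 in
private lemma p3_to_p2 {κbar : Cardinal.{u}} (mon : Monster L M κbar)
    {α β : Type u} (hα : #α < κbar) (hβ : #β < κbar)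
    (E : IER L M α) (a : α → M) (F : IER L M β) (b : β → M)
    (h3 : 2 ^ (#α + #β + cardT L) < orbitCard L M (autU L M E a) F b) :
    ∃ bi : ℕ → β → M, IndiscOver L M (Set.range a) bi ∧
      (∃ σ ∈ autU L M E a, ∀ i, σ (b i) = bi 0 i) ∧
      ∀ i j : ℕ, i < j → ¬ F.rel (bi i) (bi j) := by
  classical
  set μ := #α + #β + cardT L with hμdef
  have hcardT : cardT L < κbar := by
    rw [cardT]
    exact Cardinal.add_lt_of_lt mon.isRegular.aleph0_le mon.lang_lt mon.aleph0_lt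
  have hμκ : μ < κbar := by
    rw [hμdef]
    exact Cardinal.add_lt_of_lt mon.isRegular.aleph0_le
      (Cardinal.add_lt_of_lt mon.isRegular.aleph0_le hα hβ) hcardT
  have hμinf : ℵ₀ ≤ μ := (cardT_infinite (L := L)).trans le_add_self
  have h2μpos : (1 : Cardinal.{u}) ≤ 2 ^ μ := by
    rw [Cardinal.one_le_iff_ne_zero]
    exact Cardinal.power_ne_zero μ two_ne_zero
  -- β is nonempty
  rcases isEmpty_or_nonempty β with hemp | hne
  · exfalso
    have hsub : (Set.range fun σ : ↥(autU L M E a) => Quotient.mk F.setoid (⇑σ.1 ∘ b)).Subsingleton := by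
      rintro x ⟨σ, rfl⟩ y ⟨σ', rfl⟩
      have h1 : ⇑σ.1 ∘ b = ⇑σ'.1 ∘ b := funext fun w => isEmptyElim w
      show Quotient.mk F.setoid (⇑σ.1 ∘ b) = Quotient.mk F.setoid (⇑σ'.1 ∘ b)
      rw [h1]
    have hle : orbitCard L M (autU L M E a) F b ≤ 1 := hsub.cardinalMk_le_one
    exact absurd ((h3.trans_le hle).trans_le h2μpos) (lt_irrefl _)
  haveI : Nonempty M := ⟨b (Classical.arbitrary β)⟩
  -- a small model containing the range of a
  obtain ⟨N, hNsub, hNμ⟩ : ∃ N : L.ElementarySubstructure M,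
      Set.range a ⊆ ↑N ∧ #↥N ≤ μ := by
    set ν := #α + cardT L with hνdef
    have hνinf : ℵ₀ ≤ ν := (cardT_infinite (L := L)).trans le_add_self
    have hνμ : ν ≤ μ := by
      rw [hνdef, hμdef]
      exact add_le_add le_self_add le_rfl
    rcases le_or_gt ν #M with hν | hν
    · obtain ⟨N, hN1, hN2⟩ := Language.exists_elementarySubstructure_card_eq L
        (Set.range a) ν hνinf
        (by simpa using (Cardinal.mk_range_le).trans le_self_add)
        (by simpa [hνdef, cardT] using (le_self_add : L.card ≤ L.card + ℵ₀).trans le_add_self)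
        (by simpa using hν)
      refine ⟨N, hN1, ?_⟩
      rw [Cardinal.lift_inj] at hN2
      rw [hN2]
      exact hνμ
    · refine ⟨⊤, fun x _ => trivial, ?_⟩
      have : #↥(⊤ : L.ElementarySubstructure M) ≤ #M :=
        Cardinal.mk_le_of_injective (fun x y h => Subtype.ext h)
      exact this.trans (hν.le.trans hνμ)
  set NS := (N : Set M) with hNSdef
  have hNSκ : #↥NS < κbar := lt_of_le_of_lt hNμ hμκ
  -- counting formulas and types over N
  have hform : #(L.Formula (↥NS ⊕ β)) ≤ μ := by
    refine (card_formula_le (↥NS ⊕ β)).trans ?_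
    rw [max_le_iff]
    refine ⟨hμinf, ?_⟩
    have h1 : #(↥NS ⊕ β) + L.card ≤ μ + μ + μ := by
      rw [Cardinal.mk_sum, Cardinal.lift_id, Cardinal.lift_id]
      have hβμ : #β ≤ μ := le_trans (le_add_self) (le_self_add)
      have hLμ : L.card ≤ μ := le_trans (le_self_add : L.card ≤ L.card + ℵ₀) le_add_self
      exact add_le_add (add_le_add hNμ hβμ) hLμ
    refine h1.trans ?_
    rw [Cardinal.add_eq_self hμinf, Cardinal.add_eq_self hμinf]
  have htypes : #(Set (L.Formula (↥NS ⊕ β))) ≤ 2 ^ μ := by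
    rw [Cardinal.mk_set]
    exact Cardinal.power_le_power_left two_ne_zero hform
  -- pigeonhole: two orbit representatives with the same type over N
  set Orb := Set.range (fun σ : ↥(autU L M E a) => Quotient.mk F.setoid (⇑σ.1 ∘ b)) with hOrb
  have h3' : 2 ^ μ < #↥Orb := h3
  set rep : ↥Orb → (β → M) := fun r => ⇑(Classical.choose r.2).1 ∘ b with hrepdef
  have hrep : ∀ r : ↥Orb, Quotient.mk F.setoid (rep r) = r.1 :=
    fun r => Classical.choose_spec r.2
  set tmap : ↥Orb → Set (L.Formula (↥NS ⊕ β)) :=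
    fun r => {φ | φ.Realize (Sum.elim Subtype.val (rep r))} with htmapdef
  have hnoninj : ¬ Function.Injective tmap := by
    intro hinj
    exact absurd ((Cardinal.mk_le_of_injective hinj).trans htypes) (not_le.mpr h3')
  obtain ⟨r1, r2, heqt, hner⟩ := Function.not_injective_iff.mp hnoninj
  set d := rep r1 with hd
  set d' := rep r2 with hd'
  have hdd' : ¬ F.rel d d' := by
    intro h
    refine hner (Subtype.ext ?_)
    rw [← hrep r1, ← hrep r2]
    exact Quotient.sound h
  have hst : ∀ φ : L.Formula (↥NS ⊕ β),
      (φ.Realize (Sum.elim Subtype.val d) ↔ φ.Realize (Sum.elim Subtype.val d')) := by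
    intro φ
    have := Set.ext_iff.mp heqt φ
    exact this
  -- the coheir ultrafilter
  set tpD : Set (L.Formula (↥NS ⊕ β)) := {φ | φ.Realize (Sum.elim Subtype.val d)} with htpD
  have hwitness : ∀ φ ∈ tpD,
      {m : β → ↥NS | φ.Realize (Sum.elim Subtype.val (Subtype.val ∘ m))}.Nonempty := by
    intro φ hφ
    obtain ⟨m, hm⟩ := exists_witness_in N φ d hφ
    exact ⟨m, hm⟩
  set F0 : Filter (β → ↥NS) :=
    { sets := {U | ∃ φ ∈ tpD,
        {m : β → ↥NS | φ.Realize (Sum.elim Subtype.val (Subtype.val ∘ m))} ⊆ U},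
      univ_sets := ⟨⊤, by simp [htpD], fun m _ => trivial⟩,
      sets_of_superset := fun ⟨φ, hφ, hsub2⟩ hUV => ⟨φ, hφ, hsub2.trans hUV⟩,
      inter_sets := by
        rintro U V ⟨φ, hφ, hsubU⟩ ⟨ψ, hψ, hsubV⟩
        refine ⟨φ ⊓ ψ, ?_, ?_⟩
        · show (φ ⊓ ψ).Realize (Sum.elim Subtype.val d)
          rw [Language.Formula.realize_inf]
          exact ⟨hφ, hψ⟩
        · intro m hm
          have hm' : (φ ⊓ ψ).Realize (Sum.elim Subtype.val (Subtype.val ∘ m)) := hm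
          rw [Language.Formula.realize_inf] at hm'
          exact ⟨hsubU hm'.1, hsubV hm'.2⟩ } with hF0
  haveI hF0ne : F0.NeBot := by
    rw [← Filter.forall_mem_nonempty_iff_neBot]
    rintro U ⟨φ, hφ, hsub2⟩
    exact ((hwitness φ hφ).mono hsub2)
  set D := Ultrafilter.of F0 with hD
  have hDge : ∀ φ ∈ tpD,
      {m : β → ↥NS | φ.Realize (Sum.elim Subtype.val (Subtype.val ∘ m))} ∈ D :=
    fun φ hφ => Ultrafilter.of_le F0 ⟨φ, hφ, subset_rfl⟩
  -- d and d' realize the limit type of D over N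
  have hbase_d : ∀ φ : L.Formula (↥NS ⊕ β),
      {m : β → ↥NS | φ.Realize (Sum.elim Subtype.val (Subtype.val ∘ m))} ∈ D →
      φ.Realize (Sum.elim Subtype.val d) := by
    intro φ hφ
    by_contra hn
    have hnot : φ.not ∈ tpD := by
      show φ.not.Realize (Sum.elim Subtype.val d)
      rw [Language.Formula.realize_not]
      exact hn
    have h1 := hDge φ.not hnot
    have h2 : {m : β → ↥NS | φ.not.Realize (Sum.elim Subtype.val (Subtype.val ∘ m))} =
        {m : β → ↥NS | φ.Realize (Sum.elim Subtype.val (Subtype.val ∘ m))}ᶜ := by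
      ext m
      simp [Language.Formula.realize_not]
    rw [h2] at h1
    exact (Ultrafilter.compl_mem_iff_notMem.mp h1) hφ
  have hbase_d' : ∀ φ : L.Formula (↥NS ⊕ β),
      {m : β → ↥NS | φ.Realize (Sum.elim Subtype.val (Subtype.val ∘ m))} ∈ D →
      φ.Realize (Sum.elim Subtype.val d') :=
    fun φ hφ => (hst φ).mp (hbase_d φ hφ)
  -- the coheir sequence
  obtain ⟨e, he⟩ := exists_coheir_seq NS D mon hNSκ hβ d d'
  have hecoheir : ∀ n, CoheirOver L NS D (hist e n) (e n) := by
    intro n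
    have := coheir_mono NS D (he n) (Sum.inl : Fin n × β → (Fin n × β) ⊕ (β ⊕ β))
    exact this
  haveI : ∀ n : ℕ, IsEmpty (Fin 0 × β) := fun _ => ⟨fun p => p.1.elim0⟩
  -- the sequences starting with d and d'
  set I : ℕ → β → M := fun k => Nat.rec d (fun n _ => e n) k with hI
  set I' : ℕ → β → M := fun k => Nat.rec d' (fun n _ => e n) k with hI'
  have hIcoheir : ∀ n, CoheirOver L NS D (hist I n) (I n) := by
    intro n
    match n with
    | 0 => exact coheir_of_empty NS D (hist I 0) hbase_d
    | (k + 1) =>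
      have hmono := coheir_mono NS D (he k) (fun q : Fin (k + 1) × β =>
        if h : (q.1 : ℕ) = 0 then (Sum.inr (Sum.inl q.2) : (Fin k × β) ⊕ (β ⊕ β))
        else Sum.inl (⟨(q.1 : ℕ) - 1, by omega⟩, q.2))
      have hfe : ((Sum.elim (hist e k) (Sum.elim d d') : ((Fin k × β) ⊕ (β ⊕ β)) → M) ∘
          (fun q : Fin (k + 1) × β =>
            if h : (q.1 : ℕ) = 0 then (Sum.inr (Sum.inl q.2) : (Fin k × β) ⊕ (β ⊕ β))
            else Sum.inl (⟨(q.1 : ℕ) - 1, by omega⟩, q.2))) = hist I (k + 1) := by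
        funext q
        by_cases h : (q.1 : ℕ) = 0
        · simp only [Function.comp_apply, dif_pos h]
          show d q.2 = I (q.1 : ℕ) q.2
          rw [h]
          rfl
        · simp only [Function.comp_apply, dif_neg h]
          show e ((q.1 : ℕ) - 1) q.2 = I (q.1 : ℕ) q.2
          obtain ⟨m, hm⟩ := Nat.exists_eq_succ_of_ne_zero h
          rw [hm]
          rfl
      rw [hfe] at hmono
      exact hmono
  have hI'coheir : ∀ n, CoheirOver L NS D (hist I' n) (I' n) := by
    intro n
    match n with
    | 0 => exact coheir_of_empty NS D (hist I' 0) hbase_d'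
    | (k + 1) =>
      have hmono := coheir_mono NS D (he k) (fun q : Fin (k + 1) × β =>
        if h : (q.1 : ℕ) = 0 then (Sum.inr (Sum.inr q.2) : (Fin k × β) ⊕ (β ⊕ β))
        else Sum.inl (⟨(q.1 : ℕ) - 1, by omega⟩, q.2))
      have hfe : ((Sum.elim (hist e k) (Sum.elim d d') : ((Fin k × β) ⊕ (β ⊕ β)) → M) ∘
          (fun q : Fin (k + 1) × β =>
            if h : (q.1 : ℕ) = 0 then (Sum.inr (Sum.inr q.2) : (Fin k × β) ⊕ (β ⊕ β))
            else Sum.inl (⟨(q.1 : ℕ) - 1, by omega⟩, q.2))) = hist I' (k + 1) := by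
        funext q
        by_cases h : (q.1 : ℕ) = 0
        · simp only [Function.comp_apply, dif_pos h]
          show d' q.2 = I' (q.1 : ℕ) q.2
          rw [h]
          rfl
        · simp only [Function.comp_apply, dif_neg h]
          show e ((q.1 : ℕ) - 1) q.2 = I' (q.1 : ℕ) q.2
          obtain ⟨m, hm⟩ := Nat.exists_eq_succ_of_ne_zero h
          rw [hm]
          rfl
      rw [hfe] at hmono
      exact hmono
  have hIndI : IndiscOver L M NS I := coheir_indisc NS D hIcoheir
  have hIndI' : IndiscOver L M NS I' := coheir_indisc NS D hI'coheir
  have hIndE : IndiscOver L M NS e := coheir_indisc NS D hecoheir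
  -- main case split
  by_cases hF01 : F.rel (e 0) (e 1)
  · exfalso
    have hde0 : F.rel d (e 0) := by
      have hstI := indisc_pair_sameType hIndI (Nat.zero_lt_one) (Nat.lt_succ_self 1)
      exact (F.invariant _ _ _ _ hstI).mpr hF01
    have hd'e0 : F.rel d' (e 0) := by
      have hstI' := indisc_pair_sameType hIndI' (Nat.zero_lt_one) (Nat.lt_succ_self 1)
      exact (F.invariant _ _ _ _ hstI').mpr hF01
    exact hdd' (F.equiv.trans hde0 (F.equiv.symm hd'e0))
  · refine ⟨e, indiscOver_mono hNsub hIndE, ?_, ?_⟩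
    · -- an automorphism over a_E sending b to e 0
      have hsame : ∀ φ : L.Formula (↥NS ⊕ β),
          (φ.Realize (Sum.elim Subtype.val d) ↔ φ.Realize (Sum.elim Subtype.val (e 0))) := by
        intro φ
        exact (coheir_base_iff NS D (hIcoheir 0) φ).trans
          (coheir_base_iff NS D (hecoheir 0) φ).symm
      have hcardNSβ : #(↥NS ⊕ β) < κbar := by
        rw [Cardinal.mk_sum, Cardinal.lift_id, Cardinal.lift_id]
        exact Cardinal.add_lt_of_lt mon.isRegular.aleph0_le hNSκ hβ
      obtain ⟨τ, hτ⟩ := mon.homog (↥NS ⊕ β) (Sum.elim Subtype.val d)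
        (Sum.elim Subtype.val (e 0)) hcardNSβ hsame
      have hfix : ∀ i, τ (a i) = a i := by
        intro i
        have hai : a i ∈ NS := hNsub (Set.mem_range_self i)
        have := hτ (Sum.inl ⟨a i, hai⟩)
        exact this
      refine ⟨τ * (Classical.choose r1.2).1,
        mul_mem_autU hfix (Classical.choose r1.2).2, ?_⟩
      intro i
      show τ ((Classical.choose r1.2).1 (b i)) = e 0 i
      have hdi : (Classical.choose r1.2).1 (b i) = d i := rfl
      rw [hdi]
      exact hτ (Sum.inr i)
    · intro i j hij
      have hstE := indisc_pair_sameType hIndE hij (Nat.zero_lt_one)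
      intro hrel
      exact hF01 ((F.invariant _ _ _ _ hstE).mp hrel)

end Main


/-- For ultraimaginaries `a_E` and `b_F`, the following are
equivalent: (1) `b_F ∉ bddᵘ(a_E)`; (2) there is an `a`-indiscernible sequence
`(b_i)_{i<ω}` with `b_0 ≡_{a_E} b` and `¬ b_i F b_j` for `i < j`; (3) the orbit of
`b_F` under `Aut(𝕄/a_E)` has cardinality greater than `2^(|ab|+|T|)`. -/
theorem statement_1 (L : FirstOrder.Language.{u, u}) (M : Type u) [L.Structure M]
    (κbar : Cardinal.{u}) (_mon : Monster L M κbar)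
    {α β : Type u} (hα : #α < κbar) (hβ : #β < κbar)
    (E : IER L M α) (a : α → M) (F : IER L M β) (b : β → M) :
    ((¬ BddU L M κbar (autU L M E a) F b) ↔
      (∃ bi : ℕ → β → M, IndiscOver L M (Set.range a) bi ∧
        (∃ σ ∈ autU L M E a, ∀ i, σ (b i) = bi 0 i) ∧
        ∀ i j : ℕ, i < j → ¬ F.rel (bi i) (bi j))) ∧
    ((¬ BddU L M κbar (autU L M E a) F b) ↔
      2 ^ (#α + #β + cardT L) < orbitCard L M (autU L M E a) F b) := by
  classical
  have mon := _mon
  have hcardT : cardT L < κbar := by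
    rw [cardT]
    exact Cardinal.add_lt_of_lt mon.isRegular.aleph0_le mon.lang_lt mon.aleph0_lt
  have hμκ : #α + #β + cardT L < κbar :=
    Cardinal.add_lt_of_lt mon.isRegular.aleph0_le
      (Cardinal.add_lt_of_lt mon.isRegular.aleph0_le hα hβ) hcardT
  -- (2) implies (1)
  have h21 : (∃ bi : ℕ → β → M, IndiscOver L M (Set.range a) bi ∧
      (∃ σ ∈ autU L M E a, ∀ i, σ (b i) = bi 0 i) ∧
      ∀ i j : ℕ, i < j → ¬ F.rel (bi i) (bi j)) →
      ¬ BddU L M κbar (autU L M E a) F b := by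
    rintro ⟨bi, hind, ⟨σ0, hσ0, hσ0b⟩, hF⟩ ⟨S, hS, hcov⟩
    have hsucc : Order.succ #↥S < κbar := succ_lt_of_monster mon.strongLimit hS
    have hge := orbit_ge mon hα hβ E a F b bi hind σ0 hσ0 hσ0b hF (Order.succ #↥S) hsucc
    have hle : orbitCard L M (autU L M E a) F b ≤ #↥S := by
      have hsub : Set.range (fun σ : ↥(autU L M E a) => Quotient.mk F.setoid (⇑σ.1 ∘ b)) ⊆
          (Quotient.mk F.setoid) '' S := by
        rintro q ⟨σ, rfl⟩
        obtain ⟨s, hsS, hrel⟩ := hcov σ.1 σ.2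
        exact ⟨s, hsS, (Quotient.sound hrel).symm⟩
      exact (Cardinal.mk_le_mk_of_subset hsub).trans Cardinal.mk_image_le
    exact absurd (hge.trans hle) (not_le.mpr (Order.lt_succ #↥S))
  -- (1) implies (3)
  have h13 : ¬ BddU L M κbar (autU L M E a) F b →
      2 ^ (#α + #β + cardT L) < orbitCard L M (autU L M E a) F b := by
    intro h1
    by_contra hle
    push_neg at hle
    apply h1
    refine ⟨(fun q : Quotient F.setoid => q.out) ''
      (Set.range fun σ : ↥(autU L M E a) => Quotient.mk F.setoid (⇑σ.1 ∘ b)), ?_, ?_⟩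
    · exact lt_of_le_of_lt (Cardinal.mk_image_le.trans hle)
        (mon.strongLimit _ hμκ)
    · intro σ hσ
      refine ⟨(Quotient.mk F.setoid (⇑σ ∘ b)).out, ⟨_, ⟨⟨σ, hσ⟩, rfl⟩, rfl⟩, ?_⟩
      exact @Quotient.exact _ F.setoid _ _ ((Quotient.out_eq (Quotient.mk F.setoid (⇑σ ∘ b))).symm)
  -- (2) implies (3)
  have h23 : (∃ bi : ℕ → β → M, IndiscOver L M (Set.range a) bi ∧
      (∃ σ ∈ autU L M E a, ∀ i, σ (b i) = bi 0 i) ∧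
      ∀ i j : ℕ, i < j → ¬ F.rel (bi i) (bi j)) →
      2 ^ (#α + #β + cardT L) < orbitCard L M (autU L M E a) F b := by
    rintro ⟨bi, hind, ⟨σ0, hσ0, hσ0b⟩, hF⟩
    have hsucc : Order.succ (2 ^ (#α + #β + cardT L)) < κbar :=
      succ_lt_of_monster mon.strongLimit (mon.strongLimit _ hμκ)
    have hge := orbit_ge mon hα hβ E a F b bi hind σ0 hσ0 hσ0b hF _ hsucc
    exact Order.succ_le_iff.mp hge
  exact ⟨⟨fun h1 => p3_to_p2 mon hα hβ E a F b (h13 h1), h21⟩,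
    ⟨h13, fun h3 => h21 (p3_to_p2 mon hα hβ E a F b h3)⟩⟩

end BddUltra
end

section
/- For any ultraimaginary a_E and any cardinal λ, the set bddᵘ_λ(a_E) of ultraimaginaries of arity at most λ bounded over a_E has cardinality at most 2^{|a| + 2^{λ+|T|}}. -/
open FirstOrder Cardinal

universe u v w

namespace BddUltra

variable (L : FirstOrder.Language.{u, u}) (M : Type u) [L.Structure M]

/-! ### Auxiliary machinery for Statement 2 -/

open Set

/-- Tarski–Vaught-style witness-pulling property of a parameter set `NN ⊆ M`:
any formula with parameters in `NN` realized by a tuple from `M` is realized by a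
tuple from `NN`. -/
def TVP (NN : Set M) : Prop :=
  ∀ (B : Type u) (ψ : L.Formula (↥NN ⊕ B)) (w : B → M),
    ψ.Realize (Sum.elim (Subtype.val : ↥NN → M) w) →
      ∃ g : B → ↥NN, ψ.Realize (Sum.elim (Subtype.val : ↥NN → M) (Subtype.val ∘ g))

theorem tvp_univ : TVP L M Set.univ := by
  intro B ψ w h
  refine ⟨fun b => ⟨w b, trivial⟩, ?_⟩
  have heq : (Sum.elim (Subtype.val : ↥(Set.univ : Set M) → M)
      (Subtype.val ∘ fun b => (⟨w b, trivial⟩ : ↥(Set.univ : Set M)))) =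
      Sum.elim (Subtype.val : ↥(Set.univ : Set M) → M) w := by
    funext x; cases x <;> rfl
  rw [heq]; exact h

theorem tvp_elementary [Nonempty M] (N : L.ElementarySubstructure M) :
    TVP L M (N : Set M) := by
  classical
  intro B ψ w h
  obtain ⟨n₀⟩ : Nonempty ↥N := inferInstance
  have hsub : ↑ψ.freeVarFinset ⊆ (↑ψ.freeVarFinset : Set (↥(N : Set M) ⊕ B)) := subset_rfl
  set S : Set (↥(N : Set M) ⊕ B) := ↑ψ.freeVarFinset with hS
  set ψ' : L.Formula ↥S := ψ.restrictFreeVar (Set.inclusion hsub) with hψ'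
  have hres : ∀ v : (↥(N : Set M) ⊕ B) → M, ψ'.Realize (v ∘ (↑)) ↔ ψ.Realize v := fun v =>
    Language.BoundedFormula.realize_restrictFreeVar' hsub
  haveI : Finite ↥S := by
    rw [hS, Set.finite_coe_iff]; exact ψ.freeVarFinset.finite_toSet
  haveI : Finite {x : ↥S // (x : ↥(N : Set M) ⊕ B).isRight} := Subtype.finite
  set f : ↥S → ↥(N : Set M) ⊕ {x : ↥S // (x : ↥(N : Set M) ⊕ B).isRight} := fun x =>
    if hx : (x : ↥(N : Set M) ⊕ B).isRight then Sum.inr ⟨x, hx⟩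
    else Sum.inl ((x : ↥(N : Set M) ⊕ B).getLeft (by
      rcases hx' : (x : ↥(N : Set M) ⊕ B) with y | y
      · rfl
      · exact absurd (by rw [hx']; rfl) hx)) with hf
  set χ : L.Formula ↥(N : Set M) := (ψ'.relabel f).iExs _ with hχ
  have hM : χ.Realize (Subtype.val : ↥(N : Set M) → M) := by
    rw [hχ, Language.Formula.realize_iExs]
    simp only [Language.Formula.realize_relabel, Function.comp_def]
    refine ⟨fun x => Sum.elim (Subtype.val : ↥(N : Set M) → M) w (x : ↥(N : Set M) ⊕ B), ?_⟩
    have heq : (fun a => Sum.elim (Subtype.val : ↥(N : Set M) → M)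
        (fun x : {x : ↥S // (x : ↥(N : Set M) ⊕ B).isRight} =>
          Sum.elim (Subtype.val : ↥(N : Set M) → M) w (x : ↥(N : Set M) ⊕ B)) (f a)) =
        (Sum.elim (Subtype.val : ↥(N : Set M) → M) w) ∘ ((↑) : ↥S → (↥(N : Set M) ⊕ B)) := by
      funext a
      rcases ha : (a : ↥(N : Set M) ⊕ B) with y | y
      · have hnr : ¬ (a : ↥(N : Set M) ⊕ B).isRight := by rw [ha]; simp
        simp only [hf, dif_neg hnr]
        simp [ha]
      · have hr : (a : ↥(N : Set M) ⊕ B).isRight := by rw [ha]; rfl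
        simp only [hf, dif_pos hr]
        simp [ha]
    rw [heq, hres]
    exact h
  set x : ↥(N : Set M) → ↥N := fun n => ⟨n.1, n.2⟩ with hx
  have hNreal : χ.Realize x := by
    rw [← N.subtype.map_formula χ x]
    have : (⇑N.subtype ∘ x) = (Subtype.val : ↥(N : Set M) → M) := rfl
    rw [this]
    exact hM
  rw [hχ, Language.Formula.realize_iExs] at hNreal
  simp only [Language.Formula.realize_relabel, Function.comp_def] at hNreal
  obtain ⟨i, hi⟩ := hNreal
  set u : ↥S → ↥N := fun a => Sum.elim x i (f a) with hu
  have hMreal : ψ'.Realize (((↑) : ↥N → M) ∘ u) :=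
    (N.subtype.map_formula ψ' u).2 hi
  set g : B → ↥(N : Set M) := fun b =>
    if hb : (Sum.inr b : ↥(N : Set M) ⊕ B) ∈ S then
      ⟨(u ⟨Sum.inr b, hb⟩ : ↥N).1, (u ⟨Sum.inr b, hb⟩).2⟩
    else ⟨(n₀ : ↥N).1, n₀.2⟩ with hg
  refine ⟨g, ?_⟩
  rw [← hres]
  have heq2 : (Sum.elim (Subtype.val : ↥(N : Set M) → M)
      (Subtype.val ∘ g)) ∘ ((↑) : ↥S → (↥(N : Set M) ⊕ B)) = ((↑) : ↥N → M) ∘ u := by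
    funext a
    rcases ha : (a : ↥(N : Set M) ⊕ B) with y | y
    · have hnr : ¬ (a : ↥(N : Set M) ⊕ B).isRight := by rw [ha]; simp
      simp only [Function.comp_apply, ha, Sum.elim_inl, hu, hf, dif_neg hnr]
      simp
      rfl
    · have hb : (Sum.inr y : ↥(N : Set M) ⊕ B) ∈ S := by rw [← ha]; exact a.2
      have haa : (⟨Sum.inr y, hb⟩ : ↥S) = a := Subtype.ext ha.symm
      simp only [Function.comp_apply, ha, Sum.elim_inr, hg]
      rw [dif_pos hb, haa]
  rw [heq2]
  exact hMreal

/-- If `M` is infinite, then a `κbar`-saturated `M` has size at least `κbar`. -/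
theorem big_of_infinite [Infinite M] {κbar : Cardinal.{u}} (hκ : ℵ₀ < κbar)
    (hsat : Saturated L M κbar) : κbar ≤ #M := by
  classical
  by_contra hlt
  push_neg at hlt
  set φd : M → L.Formula (M ⊕ PUnit.{u+1}) := fun m =>
    (Language.Term.equal (Language.Term.var (Sum.inl m))
      (Language.Term.var (Sum.inr (PUnit.unit : PUnit.{u+1})))).not with hφd
  have hrealize : ∀ (m : M) (v : M ⊕ PUnit.{u+1} → M),
      (φd m).Realize v ↔ ¬ v (Sum.inl m) = v (Sum.inr PUnit.unit) := by
    intro m v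
    rw [hφd]
    simp [Language.Formula.realize_not, Language.Formula.realize_equal]
  have hPUnit : #(PUnit : Type u) < κbar := by
    have : #(PUnit : Type u) = 1 := Cardinal.mk_eq_one _
    rw [this]
    exact lt_trans Cardinal.one_lt_aleph0 hκ
  have hfr : ∀ s : Finset (L.Formula (M ⊕ PUnit.{u+1})), ↑s ⊆ Set.range φd →
      ∃ b : PUnit → M, ∀ φ ∈ s, φ.Realize (Sum.elim id b) := by
    intro s hs
    set dec : L.Formula (M ⊕ PUnit.{u+1}) → M := fun φ =>
      if h : ∃ m : M, φ = φd m then h.choose else Classical.arbitrary M with hdec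
    obtain ⟨b, hb⟩ := Infinite.exists_notMem_finset (s.image dec)
    refine ⟨fun _ => b, ?_⟩
    intro φ hφ
    obtain ⟨m, hm⟩ := hs hφ
    have hex : ∃ m : M, φ = φd m := ⟨m, hm.symm⟩
    have hdφ : dec φ = hex.choose := by rw [hdec]; exact dif_pos hex
    have hφeq : φ = φd (dec φ) := by rw [hdφ]; exact hex.choose_spec
    rw [hφeq, hrealize]
    intro hcontra
    simp only [Sum.elim_inl, Sum.elim_inr, id] at hcontra
    exact hb (hcontra ▸ Finset.mem_image_of_mem dec hφ)
  obtain ⟨bb, hbb⟩ := hsat M PUnit hlt hPUnit id (Set.range φd) hfr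
  have hfin := hbb (φd (bb PUnit.unit)) (Set.mem_range_self _)
  rw [hrealize] at hfin
  exact hfin rfl

/-- Existence of a small Tarski–Vaught set containing the range of `a`. -/
theorem exists_NN {κbar : Cardinal.{u}} (mon : Monster L M κbar) {α : Type u}
    (hα : #α < κbar) (a : α → M) :
    ∃ NN : Set M, Set.range a ⊆ NN ∧ #↥NN ≤ #α + cardT L ∧ TVP L M NN := by
  have hℵ : ℵ₀ ≤ #α + cardT L := by
    refine le_trans ?_ (self_le_add_left _ _)
    exact le_trans (self_le_add_left _ _) le_rfl
  rcases finite_or_infinite M with hfin | hinf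
  · refine ⟨Set.univ, Set.subset_univ _, ?_, tvp_univ L M⟩
    rw [Cardinal.mk_univ]
    exact le_trans (Cardinal.lt_aleph0_of_finite M).le hℵ
  · haveI : Nonempty M := inferInstance
    have hbig : κbar ≤ #M := big_of_infinite L M mon.aleph0_lt mon.saturated
    have hκlt : #α + cardT L < κbar := by
      have h1 : cardT L < κbar :=
        Cardinal.add_lt_of_lt mon.aleph0_lt.le mon.lang_lt mon.aleph0_lt
      exact Cardinal.add_lt_of_lt mon.aleph0_lt.le hα h1
    obtain ⟨N, hsub, hcard⟩ := Language.exists_elementarySubstructure_card_eq L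
      (Set.range a) (#α + cardT L) hℵ
      (by simpa using (Cardinal.mk_range_le).trans le_self_add)
      (by simp only [Cardinal.lift_id]
          refine le_trans ?_ (self_le_add_left _ _)
          unfold cardT
          exact le_self_add)
      (by simpa using hκlt.le.trans hbig)
    refine ⟨(N : Set M), hsub, ?_, tvp_elementary L M N⟩
    have : #↥(N : Set M) = #α + cardT L := by simpa using hcard
    exact this.le

/-- **Key lemma**: if `b_F` is bounded over `a_E` and `b ≡_NN b'` where `NN` is a
Tarski–Vaught set containing the range of `a`, then `F.rel b b'`. -/
theorem key_lemma {κbar : Cardinal.{u}} (mon : Monster L M κbar)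
    {α : Type u} (E : IER L M α) (a : α → M)
    (NN : Set M) (hNa : Set.range a ⊆ NN) (hNκ : #↥NN < κbar) (hTV : TVP L M NN)
    {B : Type u} (hBκ : #B < κbar) (F : IER L M B) (dd dd' : B → M)
    (hBdd : BddU L M κbar (autU L M E a) F dd)
    (hSame : SameTypeOver L M NN dd dd') : F.rel dd dd' := by
  classical
  set ν : ↥NN → M := Subtype.val with hν
  have hℵκ : ℵ₀ < κbar := mon.aleph0_lt
  -- ## The coheir ultrafilter
  set R := (B → ↥NN) with hR
  set D : L.Formula (↥NN ⊕ B) → Set R :=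
    fun φ => {g : R | φ.Realize (Sum.elim ν (ν ∘ g))} with hD
  set C : Set (Set R) := {A | ∃ φ : L.Formula (↥NN ⊕ B),
    φ.Realize (Sum.elim ν dd) ∧ A = D φ} with hC
  have hFIP : ∀ t : Set (Set R), t ⊆ C → t.Finite → (⋂₀ t).Nonempty := by
    intro t htC htfin
    have hconj : ∀ t : Set (Set R), t.Finite → t ⊆ C →
        ∃ φ : L.Formula (↥NN ⊕ B), φ.Realize (Sum.elim ν dd) ∧ D φ ⊆ ⋂₀ t := by
      intro t htfin
      refine Set.Finite.induction_on t htfin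
        (motive := fun t _ => t ⊆ C → ∃ φ : L.Formula (↥NN ⊕ B), φ.Realize (Sum.elim ν dd) ∧ D φ ⊆ ⋂₀ t) ?_ ?_
      · intro _
        refine ⟨⊤, ?_, ?_⟩
        · rw [Language.Formula.realize_top]; trivial
        · intro g _; rw [Set.sInter_empty]; trivial
      · intro A t' hAt' ht'fin ih hsub
        obtain ⟨φ₁, hφ₁, hA⟩ := hsub (Set.mem_insert _ _)
        obtain ⟨φ₂, hφ₂, hsub₂⟩ := ih (fun x hx => hsub (Set.mem_insert_of_mem _ hx))
        refine ⟨φ₁ ⊓ φ₂, ?_, ?_⟩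
        · rw [Language.Formula.realize_inf]; exact ⟨hφ₁, hφ₂⟩
        · intro g hg
          have hg' : (φ₁ ⊓ φ₂).Realize (Sum.elim ν (ν ∘ g)) := hg
          rw [Language.Formula.realize_inf] at hg'
          rw [Set.sInter_insert]
          exact ⟨hA ▸ hg'.1, hsub₂ hg'.2⟩
    obtain ⟨φ, hφ, hsub⟩ := hconj t htfin htC
    obtain ⟨g, hg⟩ := hTV B φ dd hφ
    exact ⟨g, hsub hg⟩
  haveI hNB : Filter.NeBot (Filter.generate C) :=
    Filter.generate_neBot_iff.mpr (fun t ht1 ht2 => hFIP t ht1 ht2)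
  set U : Ultrafilter R := Ultrafilter.of (Filter.generate C) with hU
  have hCU : ∀ φ : L.Formula (↥NN ⊕ B), φ.Realize (Sum.elim ν dd) → D φ ∈ U :=
    fun φ hφ => (Ultrafilter.of_le (Filter.generate C))
      (Filter.mem_generate_of_mem ⟨φ, hφ, rfl⟩)
  set memU : (γ : Type u) → (γ → M) → L.Formula (γ ⊕ B) → Prop :=
    fun γ e φ => {g : R | φ.Realize (Sum.elim e (ν ∘ g))} ∈ U with hmemU
  -- ## Basic properties of the ultrafilter type
  have memU_not : ∀ (γ : Type u) (e : γ → M) (φ : L.Formula (γ ⊕ B)),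
      memU γ e φ.not ↔ ¬ memU γ e φ := by
    intro γ e φ
    have hset : {g : R | φ.not.Realize (Sum.elim e (ν ∘ g))} =
        {g : R | φ.Realize (Sum.elim e (ν ∘ g))}ᶜ := by
      ext g; simp [Language.Formula.realize_not]
    simp only [hmemU]
    rw [hset]
    exact Ultrafilter.compl_mem_iff_notMem
  have memU_base : ∀ φ : L.Formula (↥NN ⊕ B),
      memU ↥NN ν φ ↔ φ.Realize (Sum.elim ν dd) := by
    intro φ
    constructor
    · intro h
      by_contra hn
      have h2 : φ.not.Realize (Sum.elim ν dd) := by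
        rw [Language.Formula.realize_not]; exact hn
      have h4 : (D φ.not ∩ {g : R | φ.Realize (Sum.elim ν (ν ∘ g))}) ∈ U :=
        Filter.inter_mem (hCU φ.not h2) h
      obtain ⟨g, hg1, hg2⟩ := U.nonempty_of_mem h4
      have hg1' : φ.not.Realize (Sum.elim ν (ν ∘ g)) := hg1
      rw [Language.Formula.realize_not] at hg1'
      exact hg1' hg2
    · intro h; exact hCU φ h
  have memU_invariant : ∀ (γ : Type u) (e e' : γ → M), SameTypeOver L M NN e e' →
      ∀ φ : L.Formula (γ ⊕ B), memU γ e φ → memU γ e' φ := by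
    intro γ e e' hee φ h
    by_contra hn
    have h2 : memU γ e' φ.not := (memU_not _ _ _).mpr hn
    have h4 : ({g : R | φ.Realize (Sum.elim e (ν ∘ g))} ∩
        {g : R | φ.not.Realize (Sum.elim e' (ν ∘ g))}) ∈ U := Filter.inter_mem h h2
    obtain ⟨g, hg1, hg2⟩ := U.nonempty_of_mem h4
    have hg2' : φ.not.Realize (Sum.elim e' (ν ∘ g)) := hg2
    rw [Language.Formula.realize_not] at hg2'
    have hr : ∀ x : γ → M,
        (φ.relabel (Sum.elim Sum.inr (Sum.inl ∘ g))).Realize (Sum.elim ν x) ↔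
          φ.Realize (Sum.elim x (ν ∘ g)) := by
      intro x
      rw [Language.Formula.realize_relabel]
      have hcomp : (Sum.elim ν x) ∘ (Sum.elim Sum.inr (Sum.inl ∘ g)) =
          Sum.elim x (ν ∘ g) := by funext z; cases z <;> rfl
      rw [hcomp]
    exact hg2' ((hr e').mp ((hee _).mp ((hr e).mpr hg1)))
  have memU_realizable : ∀ (γ : Type u), #γ < κbar → ∀ e : γ → M,
      ∃ cc : B → M, ∀ φ : L.Formula (γ ⊕ B), memU γ e φ → φ.Realize (Sum.elim e cc) := by
    intro γ hγ e
    have hfr : ∀ s : Finset (L.Formula (γ ⊕ B)), ↑s ⊆ {φ | memU γ e φ} →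
        ∃ b : B → M, ∀ φ ∈ s, φ.Realize (Sum.elim e b) := by
      intro s hs
      have hmem : (⋂ φ ∈ s, {g : R | φ.Realize (Sum.elim e (ν ∘ g))}) ∈ U :=
        (Filter.biInter_finset_mem s).mpr (fun φ hφ => hs hφ)
      obtain ⟨g, hg⟩ := U.nonempty_of_mem hmem
      refine ⟨ν ∘ g, ?_⟩
      intro φ hφ
      simp only [Set.mem_iInter] at hg
      exact hg φ hφ
    obtain ⟨cc, hcc⟩ := mon.saturated γ B hγ hBκ e {φ | memU γ e φ} hfr
    exact ⟨cc, fun φ h => hcc φ h⟩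
  -- ## The coheir sequence
  set γfun : ℕ → Type u := fun n => ↥NN ⊕ ((B ⊕ B) ⊕ (ULift.{u} (Fin n) × B)) with hγfun
  have hγκ : ∀ n, #(γfun n) < κbar := by
    intro n
    have hfin : #(ULift.{u} (Fin n)) < κbar := lt_trans (Cardinal.lt_aleph0_of_finite _) hℵκ
    have h1 : #(ULift.{u} (Fin n) × B) < κbar := by
      simp only [Cardinal.mk_sum, Cardinal.mk_prod, Cardinal.lift_id]
      exact Cardinal.mul_lt_of_lt hℵκ.le hfin hBκ
    have h2 : #(B ⊕ B) < κbar := by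
      simp only [Cardinal.mk_sum, Cardinal.mk_prod, Cardinal.lift_id]
      exact Cardinal.add_lt_of_lt hℵκ.le hBκ hBκ
    have h3 : #((B ⊕ B) ⊕ (ULift.{u} (Fin n) × B)) < κbar := by
      simp only [Cardinal.mk_sum, Cardinal.mk_prod, Cardinal.lift_id]
      exact Cardinal.add_lt_of_lt hℵκ.le h2 h1
    rw [hγfun]
    simp only [Cardinal.mk_sum, Cardinal.mk_prod, Cardinal.lift_id]
    exact Cardinal.add_lt_of_lt hℵκ.le hNκ h3
  set vOf : (n : ℕ) → (Fin n → B → M) → γfun n → M := fun n hist =>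
    Sum.elim ν (Sum.elim (Sum.elim dd dd') (fun p => hist p.1.down p.2)) with hvOf
  set next : (n : ℕ) → (Fin n → B → M) → B → M := fun n hist =>
    (memU_realizable (γfun n) (hγκ n) (vOf n hist)).choose with hnext
  have hnextSpec : ∀ n hist φ, memU (γfun n) (vOf n hist) φ →
      φ.Realize (Sum.elim (vOf n hist) (next n hist)) :=
    fun n hist => (memU_realizable (γfun n) (hγκ n) (vOf n hist)).choose_spec
  set H : (n : ℕ) → Fin n → B → M :=
    fun n => Nat.rec Fin.elim0 (fun m ih => Fin.snoc ih (next m ih)) n with hHdef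
  set c : ℕ → B → M := fun n => next n (H n) with hcdef
  have hHsucc : ∀ n, H (n + 1) = Fin.snoc (H n) (c n) := fun n => rfl
  have hHc : ∀ n (i : Fin n), H n i = c i.val := by
    intro n
    induction n with
    | zero => exact fun i => i.elim0
    | succ m ih =>
      intro i
      refine Fin.lastCases ?_ ?_ i
      · rw [hHsucc, Fin.snoc_last]
      · intro j
        rw [hHsucc, Fin.snoc_castSucc]
        exact ih j
  set v : (n : ℕ) → γfun n → M := fun n => vOf n (fun i => c i.val) with hvdef
  have hvH : ∀ n, vOf n (H n) = v n := by
    intro n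
    rw [hvdef]
    exact congrArg (vOf n) (funext (hHc n))
  have hcSpec : ∀ n φ, memU (γfun n) (v n) φ → φ.Realize (Sum.elim (v n) (c n)) := by
    intro n φ h
    have h2 := hnextSpec n (H n) φ (by rw [hvH n]; exact h)
    rw [hvH n] at h2
    exact h2
  set d : ℕ → B → M := fun n => Nat.casesOn n dd c with hddef
  set d' : ℕ → B → M := fun n => Nat.casesOn n dd' c with hd'def
  -- ## Pulling the ultrafilter type back along coordinate maps
  have memU_pull : ∀ (γ γ' : Type u) (h : γ' → γ) (e : γ → M) (φ : L.Formula (γ' ⊕ B)),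
      memU γ' (e ∘ h) φ ↔ memU γ e (φ.relabel (Sum.map h id)) := by
    intro γ γ' h e φ
    have hset : {g : R | φ.Realize (Sum.elim (e ∘ h) (ν ∘ g))} =
        {g : R | (φ.relabel (Sum.map h id)).Realize (Sum.elim e (ν ∘ g))} := by
      ext g
      rw [Set.mem_setOf_eq, Set.mem_setOf_eq, Language.Formula.realize_relabel]
      have hcomp : (Sum.elim e (ν ∘ g)) ∘ (Sum.map h id) = Sum.elim (e ∘ h) (ν ∘ g) := by
        funext z; cases z <;> rfl
      rw [hcomp]
    simp only [hmemU]
    rw [hset]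
  have realize_pull : ∀ (n : ℕ) (γ' : Type u) (h : γ' → γfun n) (φ : L.Formula (γ' ⊕ B)),
      memU γ' (v n ∘ h) φ → φ.Realize (Sum.elim (v n ∘ h) (c n)) := by
    intro n γ' h φ hm
    have h2 := (memU_pull (γfun n) γ' h (v n) φ).mp hm
    have h3 := hcSpec n _ h2
    rw [Language.Formula.realize_relabel] at h3
    have hcomp : (Sum.elim (v n) (c n)) ∘ (Sum.map h id) = Sum.elim (v n ∘ h) (c n) := by
      funext z; cases z <;> rfl
    rw [hcomp] at h3
    exact h3
  have hiff : ∀ (n : ℕ) (e : B → M),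
      (∃ h : (↥NN ⊕ B) → γfun n, (v n) ∘ h = Sum.elim ν e) →
      ∀ ψ : L.Formula ((↥NN ⊕ B) ⊕ B),
        (memU (↥NN ⊕ B) (Sum.elim ν e) ψ ↔ ψ.Realize (Sum.elim (Sum.elim ν e) (c n))) := by
    rintro n e ⟨h, hh⟩ ψ
    constructor
    · intro hm
      have h2 := realize_pull n (↥NN ⊕ B) h ψ (by rw [hh]; exact hm)
      rw [hh] at h2
      exact h2
    · intro hreal
      by_contra hn
      have h2 : memU _ (Sum.elim ν e) ψ.not := (memU_not _ _ _).mpr hn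
      have h3 := realize_pull n (↥NN ⊕ B) h ψ.not (by rw [hh]; exact h2)
      rw [hh, Language.Formula.realize_not] at h3
      exact h3 hreal
  have hcoord : ∀ (i m : ℕ), i ≤ m →
      ∃ h : (↥NN ⊕ B) → γfun m, (v m) ∘ h = Sum.elim ν (d i) := by
    intro i m him
    cases i with
    | zero =>
      refine ⟨Sum.elim Sum.inl (fun b => Sum.inr (Sum.inl (Sum.inl b))), ?_⟩
      funext z; cases z <;> rfl
    | succ k =>
      refine ⟨Sum.elim Sum.inl (fun b => Sum.inr (Sum.inr (ULift.up ⟨k, him⟩, b))), ?_⟩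
      funext z; cases z <;> rfl
  have hcoord' : ∀ (i m : ℕ), i ≤ m →
      ∃ h : (↥NN ⊕ B) → γfun m, (v m) ∘ h = Sum.elim ν (d' i) := by
    intro i m him
    cases i with
    | zero =>
      refine ⟨Sum.elim Sum.inl (fun b => Sum.inr (Sum.inl (Sum.inr b))), ?_⟩
      funext z; cases z <;> rfl
    | succ k =>
      refine ⟨Sum.elim Sum.inl (fun b => Sum.inr (Sum.inr (ULift.up ⟨k, him⟩, b))), ?_⟩
      funext z; cases z <;> rfl
  -- ## 1-types along the sequence
  have hone : ∀ n : ℕ, SameTypeOver L M NN (c n) dd := by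
    intro n φ
    have hcreal : ∀ φ' : L.Formula (↥NN ⊕ B), memU ↥NN ν φ' →
        φ'.Realize (Sum.elim ν (c n)) := by
      intro φ' h
      have hν' : v n ∘ Sum.inl = ν := rfl
      have h2 := realize_pull n ↥NN Sum.inl φ' (by rw [hν']; exact h)
      rw [hν'] at h2
      exact h2
    constructor
    · intro h
      by_contra hn
      have h2 : φ.not.Realize (Sum.elim ν dd) := by
        rw [Language.Formula.realize_not]; exact hn
      have h3 := hcreal φ.not ((memU_base φ.not).mpr h2)
      rw [Language.Formula.realize_not] at h3
      exact h3 h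
    · intro h
      exact hcreal φ ((memU_base φ).mpr h)
  have hconv : ∀ x y : B → M, SameTypeOver L M NN x y →
      SameTypeOver L M NN (Sum.elim ν x) (Sum.elim ν y) := by
    intro x y hxy φ
    have h1 : ∀ z : B → M, φ.Realize (Sum.elim ν (Sum.elim ν z)) ↔
        (φ.relabel (Sum.elim Sum.inl (Sum.elim Sum.inl Sum.inr))).Realize (Sum.elim ν z) := by
      intro z
      rw [Language.Formula.realize_relabel]
      have hcomp : (Sum.elim ν z) ∘ (Sum.elim Sum.inl (Sum.elim Sum.inl Sum.inr)) =
          Sum.elim ν (Sum.elim ν z) := by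
        funext w
        cases w with
        | inl => rfl
        | inr w' => cases w' <;> rfl
      rw [hcomp]
    rw [h1 x, h1 y]
    exact hxy _
  -- ## Pairwise EM property
  have hpairT : ∀ (ds : ℕ → B → M), (∀ m, ds (m + 1) = c m) →
      (∀ i, SameTypeOver L M NN (ds i) (ds 0)) →
      (∀ i m, i ≤ m → ∃ h : (↥NN ⊕ B) → γfun m, (v m) ∘ h = Sum.elim ν (ds i)) →
      ∀ i j, i < j →
        SameTypeOver L M NN (Sum.elim (ds i) (ds j)) (Sum.elim (ds 0) (ds 1)) := by
    intro ds hsucc hds hco i j hij φ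
    set τ : ↥NN ⊕ (B ⊕ B) → (↥NN ⊕ B) ⊕ B :=
      Sum.elim (Sum.inl ∘ Sum.inl) (Sum.elim (Sum.inl ∘ Sum.inr) Sum.inr) with hτ
    have hstep : ∀ x y : B → M, φ.Realize (Sum.elim ν (Sum.elim x y)) ↔
        (φ.relabel τ).Realize (Sum.elim (Sum.elim ν x) y) := by
      intro x y
      rw [Language.Formula.realize_relabel]
      have hcomp : (Sum.elim (Sum.elim ν x) y) ∘ τ = Sum.elim ν (Sum.elim x y) := by
        funext z
        rcases z with z | z
        · rfl
        · rcases z with z | z <;> rfl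
      rw [hcomp]
    obtain ⟨m, rfl⟩ : ∃ m, j = m + 1 := ⟨j - 1, by omega⟩
    rw [hstep (ds i) (ds (m + 1)), hstep (ds 0) (ds 1), hsucc m]
    have h1 : ds 1 = c 0 := hsucc 0
    rw [h1]
    rw [← hiff m (ds i) (hco i m (by omega)) (φ.relabel τ),
      ← hiff 0 (ds 0) (hco 0 0 le_rfl) (φ.relabel τ)]
    constructor
    · exact memU_invariant _ _ _ (hconv _ _ (hds i)) _
    · exact memU_invariant _ _ _ (hconv _ _ (fun φ' => (hds i φ').symm)) _
  -- ## No long antichains: main contradiction argument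
  have main : ∀ (ds : ℕ → B → M),
      (∀ i, SameTypeOver L M NN (ds i) dd) →
      (∀ i j, i < j →
        SameTypeOver L M NN (Sum.elim (ds i) (ds j)) (Sum.elim (ds 0) (ds 1))) →
      F.rel (ds 0) (ds 1) := by
    intro ds hds hp
    have hds0 : ∀ i, SameTypeOver L M NN (ds i) (ds 0) :=
      fun i φ => (hds i φ).trans ((hds 0 φ).symm)
    by_contra hNF
    obtain ⟨S, hSκ, hS⟩ := hBdd
    set μT := (Order.succ #↥S).ord.ToType with hμT
    have hμκ : #μT < κbar := by
      rw [hμT, Cardinal.mk_ord_toType]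
      exact lt_of_le_of_lt (Order.succ_le_of_lt (Cardinal.cantor _)) (mon.strongLimit _ hSκ)
    set ρ : μT → μT → (↥NN ⊕ (B ⊕ B)) → (↥NN ⊕ (μT × B)) := fun k l =>
      Sum.map id (Sum.elim (fun b => (k, b)) (fun b => (l, b))) with hρ
    set ρ₁ : μT → (↥NN ⊕ B) → (↥NN ⊕ (μT × B)) :=
      fun k => Sum.map id (fun b => (k, b)) with hρ₁
    set p : Set (L.Formula (↥NN ⊕ (μT × B))) :=
      {ψ | ∃ k l : μT, k < l ∧ ∃ φ : L.Formula (↥NN ⊕ (B ⊕ B)),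
          φ.Realize (Sum.elim ν (Sum.elim (ds 0) (ds 1))) ∧ ψ = φ.relabel (ρ k l)} ∪
      {ψ | ∃ k : μT, ∃ φ : L.Formula (↥NN ⊕ B),
          φ.Realize (Sum.elim ν (ds 0)) ∧ ψ = φ.relabel (ρ₁ k)} with hpdef
    have hμprod : #(μT × B) < κbar := by
      simp only [Cardinal.mk_sum, Cardinal.mk_prod, Cardinal.lift_id]
      exact Cardinal.mul_lt_of_lt hℵκ.le hμκ hBκ
    have hfr : ∀ sfin : Finset (L.Formula (↥NN ⊕ (μT × B))), ↑sfin ⊆ p →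
        ∃ b : μT × B → M, ∀ ψ ∈ sfin, ψ.Realize (Sum.elim ν b) := by
      intro sfin hsfin
      set idx : L.Formula (↥NN ⊕ (μT × B)) → Finset μT := fun ψ =>
        if h2 : ∃ k l : μT, k < l ∧ ∃ φ : L.Formula (↥NN ⊕ (B ⊕ B)),
            φ.Realize (Sum.elim ν (Sum.elim (ds 0) (ds 1))) ∧ ψ = φ.relabel (ρ k l) then
          {h2.choose, h2.choose_spec.choose}
        else if h1 : ∃ k : μT, ∃ φ : L.Formula (↥NN ⊕ B),
            φ.Realize (Sum.elim ν (ds 0)) ∧ ψ = φ.relabel (ρ₁ k) then {h1.choose}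
        else ∅ with hidx
      set I : Finset μT := sfin.biUnion idx with hI
      set en := I.orderIsoOfFin rfl with hen
      set w : μT × B → M := fun q =>
        if hq : q.1 ∈ I then ds ((en.symm ⟨q.1, hq⟩ : Fin I.card) : ℕ) q.2
        else ds 0 q.2 with hw
      refine ⟨w, ?_⟩
      intro ψ hψ
      by_cases h2' : ∃ k l : μT, k < l ∧ ∃ φ : L.Formula (↥NN ⊕ (B ⊕ B)),
          φ.Realize (Sum.elim ν (Sum.elim (ds 0) (ds 1))) ∧ ψ = φ.relabel (ρ k l)
      · set k := h2'.choose with hk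
        set l := h2'.choose_spec.choose with hl
        obtain ⟨hkl, φ, hφreal, hψeq⟩ := h2'.choose_spec.choose_spec
        have hkI : k ∈ I := Finset.mem_biUnion.mpr
          ⟨ψ, hψ, by rw [hidx]; simp only; rw [dif_pos h2']; exact Finset.mem_insert_self _ _⟩
        have hlI : l ∈ I := Finset.mem_biUnion.mpr
          ⟨ψ, hψ, by
            rw [hidx]; simp only; rw [dif_pos h2']
            exact Finset.mem_insert_of_mem (Finset.mem_singleton_self _)⟩
        rw [hψeq, Language.Formula.realize_relabel]
        have hcomp : (Sum.elim ν w) ∘ (ρ k l) =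
            Sum.elim ν (Sum.elim (fun b => w (k, b)) (fun b => w (l, b))) := by
          funext z
          rcases z with z | z
          · rfl
          · rcases z with z | z <;> rfl
        rw [hcomp]
        have hwk : (fun b => w (k, b)) = ds ((en.symm ⟨k, hkI⟩ : Fin I.card) : ℕ) := by
          funext b; rw [hw]; simp only; rw [dif_pos hkI]
        have hwl : (fun b => w (l, b)) = ds ((en.symm ⟨l, hlI⟩ : Fin I.card) : ℕ) := by
          funext b; rw [hw]; simp only; rw [dif_pos hlI]
        rw [hwk, hwl]
        have hlt : ((en.symm ⟨k, hkI⟩ : Fin I.card) : ℕ) <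
            ((en.symm ⟨l, hlI⟩ : Fin I.card) : ℕ) := by
          have hlt2 : en.symm ⟨k, hkI⟩ < en.symm ⟨l, hlI⟩ := by
            rw [OrderIso.lt_iff_lt]
            exact Subtype.mk_lt_mk.mpr hkl
          exact hlt2
        exact (hp _ _ hlt φ).mpr hφreal
      · have h1' : ∃ k : μT, ∃ φ : L.Formula (↥NN ⊕ B),
            φ.Realize (Sum.elim ν (ds 0)) ∧ ψ = φ.relabel (ρ₁ k) := by
          rcases hsfin hψ with h2 | h1
          · exact absurd h2 h2'
          · exact h1
        set k := h1'.choose with hk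
        obtain ⟨φ, hφreal, hψeq⟩ := h1'.choose_spec
        have hkI : k ∈ I := Finset.mem_biUnion.mpr
          ⟨ψ, hψ, by
            rw [hidx]; simp only; rw [dif_neg h2', dif_pos h1']
            exact Finset.mem_singleton_self _⟩
        rw [hψeq, Language.Formula.realize_relabel]
        have hcomp : (Sum.elim ν w) ∘ (ρ₁ k) = Sum.elim ν (fun b => w (k, b)) := by
          funext z; rcases z with z | z <;> rfl
        rw [hcomp]
        have hwk : (fun b => w (k, b)) = ds ((en.symm ⟨k, hkI⟩ : Fin I.card) : ℕ) := by
          funext b; rw [hw]; simp only; rw [dif_pos hkI]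
        rw [hwk]
        exact (hds0 _ φ).mpr hφreal
    obtain ⟨ee, hee⟩ := mon.saturated ↥NN (μT × B) hNκ hμprod ν p hfr
    set e : μT → B → M := fun k b => ee (k, b) with he
    -- consequences of the stretched type
    have f1 : ∀ k l : μT, k < l → ∀ φ : L.Formula (↥NN ⊕ (B ⊕ B)),
        φ.Realize (Sum.elim ν (Sum.elim (ds 0) (ds 1))) ↔
          φ.Realize (Sum.elim ν (Sum.elim (e k) (e l))) := by
      intro k l hkl φ
      have hfwd : ∀ φ' : L.Formula (↥NN ⊕ (B ⊕ B)),
          φ'.Realize (Sum.elim ν (Sum.elim (ds 0) (ds 1))) →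
            φ'.Realize (Sum.elim ν (Sum.elim (e k) (e l))) := by
        intro φ' h
        have hmem : (φ'.relabel (ρ k l)) ∈ p := Or.inl ⟨k, l, hkl, φ', h, rfl⟩
        have h2 := hee _ hmem
        rw [Language.Formula.realize_relabel] at h2
        have hcomp : (Sum.elim ν ee) ∘ (ρ k l) =
            Sum.elim ν (Sum.elim (e k) (e l)) := by
          funext z
          rcases z with z | z
          · rfl
          · rcases z with z | z <;> rfl
        rw [hcomp] at h2
        exact h2
      constructor
      · exact hfwd φ
      · intro h
        by_contra hn
        have h2 := hfwd φ.not (by rw [Language.Formula.realize_not]; exact hn)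
        rw [Language.Formula.realize_not] at h2
        exact h2 h
    have f2 : ∀ k : μT, SameTypeOver L M NN (e k) (ds 0) := by
      intro k φ
      have hfwd : ∀ φ' : L.Formula (↥NN ⊕ B),
          φ'.Realize (Sum.elim ν (ds 0)) → φ'.Realize (Sum.elim ν (e k)) := by
        intro φ' h
        have hmem : (φ'.relabel (ρ₁ k)) ∈ p := Or.inr ⟨k, φ', h, rfl⟩
        have h2 := hee _ hmem
        rw [Language.Formula.realize_relabel] at h2
        have hcomp : (Sum.elim ν ee) ∘ (ρ₁ k) = Sum.elim ν (e k) := by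
          funext z; rcases z with z | z <;> rfl
        rw [hcomp] at h2
        exact h2
      constructor
      · intro h
        by_contra hn
        have h2 := hfwd φ.not (by rw [Language.Formula.realize_not]; exact hn)
        rw [Language.Formula.realize_not] at h2
        exact h2 h
      · exact hfwd φ
    have f3 : ∀ k l : μT, k < l →
        SameType L M (Sum.elim (ds 0) (ds 1)) (Sum.elim (e k) (e l)) := by
      intro k l hkl φ₀
      have hlift : ∀ x y : B → M, φ₀.Realize (Sum.elim x y) ↔
          (φ₀.relabel (Sum.inr : (B ⊕ B) → ↥NN ⊕ (B ⊕ B))).Realize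
            (Sum.elim ν (Sum.elim x y)) := by
        intro x y
        rw [Language.Formula.realize_relabel]
        have hcomp : (Sum.elim ν (Sum.elim x y)) ∘
            (Sum.inr : (B ⊕ B) → ↥NN ⊕ (B ⊕ B)) = Sum.elim x y := by
          funext z; rfl
        rw [hcomp]
      rw [hlift (ds 0) (ds 1), hlift (e k) (e l)]
      exact f1 k l hkl _
    have f4 : ∀ k l : μT, k < l → ¬ F.rel (e k) (e l) := by
      intro k l hkl h
      exact hNF ((F.invariant _ _ _ _ (f3 k l hkl)).mpr h)
    -- automorphisms moving dd to each e k over NN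
    have hcard : #(↥NN ⊕ B) < κbar := by
      simp only [Cardinal.mk_sum, Cardinal.mk_prod, Cardinal.lift_id]
      exact Cardinal.add_lt_of_lt hℵκ.le hNκ hBκ
    have f5 : ∀ k : μT, ∃ σ : M ≃[L] M,
        ∀ i : ↥NN ⊕ B, σ (Sum.elim ν dd i) = Sum.elim ν (e k) i := by
      intro k
      have hst : SameType L M (Sum.elim ν dd) (Sum.elim ν (e k)) := by
        intro φ
        exact ((hds 0 φ).symm).trans ((f2 k φ).symm)
      exact mon.homog (↥NN ⊕ B) (Sum.elim ν dd) (Sum.elim ν (e k)) hcard hst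
    choose σf hσf using f5
    have hin : ∀ k : μT, σf k ∈ autU L M E a := by
      intro k
      have hfix : ⇑(σf k) ∘ a = a := by
        funext i
        have h1 := hσf k (Sum.inl ⟨a i, hNa (Set.mem_range_self i)⟩)
        exact h1
      show E.rel a (⇑(σf k) ∘ a)
      rw [hfix]
      exact E.equiv.refl a
    have hts : ∀ k : μT, ∃ t ∈ S, F.rel (⇑(σf k) ∘ dd) t := fun k => hS (σf k) (hin k)
    choose tf htfS htfrel using hts
    have f8 : ∀ k : μT, ⇑(σf k) ∘ dd = e k := by
      intro k
      funext b
      exact hσf k (Sum.inr b)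
    have hninj : ¬ Function.Injective (fun k : μT => (⟨tf k, htfS k⟩ : ↥S)) := by
      intro hinj
      have h1 := Cardinal.mk_le_of_injective hinj
      rw [hμT, Cardinal.mk_ord_toType] at h1
      exact absurd h1 (not_le.mpr (Order.lt_succ _))
    rw [Function.not_injective_iff] at hninj
    obtain ⟨k, l, hkl, hne⟩ := hninj
    have htkl : tf k = tf l := by simpa [Subtype.ext_iff] using hkl
    have hrel : F.rel (e k) (e l) := by
      have h1 : F.rel (e k) (tf k) := f8 k ▸ htfrel k
      have h2 : F.rel (e l) (tf k) := htkl ▸ (f8 l ▸ htfrel l)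
      exact F.equiv.trans h1 (F.equiv.symm h2)
    rcases lt_or_gt_of_ne hne with h | h
    · exact f4 k l h hrel
    · exact f4 l k h (F.equiv.symm hrel)
  -- ## Conclusion
  have hQ1 : F.rel dd (c 0) := by
    have hds : ∀ i, SameTypeOver L M NN (d i) dd := by
      intro i
      cases i with
      | zero => exact fun φ => Iff.rfl
      | succ n => exact hone n
    have hds0 : ∀ i, SameTypeOver L M NN (d i) (d 0) :=
      fun i φ => (hds i φ).trans ((hds 0 φ).symm)
    exact main d hds (hpairT d (fun m => rfl) hds0 hcoord)
  have hQ2 : F.rel dd' (c 0) := by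
    have hds' : ∀ i, SameTypeOver L M NN (d' i) dd := by
      intro i
      cases i with
      | zero => exact fun φ => (hSame φ).symm
      | succ n => exact hone n
    have hds0' : ∀ i, SameTypeOver L M NN (d' i) (d' 0) :=
      fun i φ => (hds' i φ).trans (((hds' 0) φ).symm)
    exact main d' hds' (hpairT d' (fun m => rfl) hds0' hcoord')
  exact F.equiv.trans hQ1 (F.equiv.symm hQ2)

/-- The number of formulas is at most `max ℵ₀ (#β + L.card)`. -/
theorem formula_card_le (β : Type u) : #(L.Formula β) ≤ max ℵ₀ (#β + L.card) := by
  have h := Language.BoundedFormula.card_le (L := L) (α := β)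
  have hinj : Function.Injective
      (fun φ : L.Formula β => (⟨0, φ⟩ : Σ n, L.BoundedFormula β n)) := by
    intro a b hab; simpa using hab
  refine (Cardinal.mk_le_of_injective hinj).trans (h.trans ?_)
  simp

/-- An invariant equivalence relation is determined by the set of types of related pairs. -/
theorem IER.rel_iff_code {β : Type u} (F : IER L M β) (u v : β → M) :
    F.rel u v ↔ {φ : L.Formula (β ⊕ β) | φ.Realize (Sum.elim u v)} ∈
      {T : Set (L.Formula (β ⊕ β)) | ∃ u' v' : β → M, F.rel u' v' ∧
        T = {φ : L.Formula (β ⊕ β) | φ.Realize (Sum.elim u' v')}} := by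
  constructor
  · intro h; exact ⟨u, v, h, rfl⟩
  · rintro ⟨u', v', h, hT⟩
    have hst : SameType L M (Sum.elim u' v') (Sum.elim u v) := by
      intro φ
      have := Set.ext_iff.mp hT φ
      exact ⟨fun h2 => this.mpr h2, fun h2 => this.mp h2⟩
    exact (F.invariant u' v' u v hst).mp h

theorem IER.ext' {β : Type u} {F F' : IER L M β} (h : F.rel = F'.rel) : F = F' := by
  cases F; cases F'
  cases h
  rfl

/-- Boundedness of an ultraimaginary only depends on the class. -/
theorem bddU_congr {κ : Cardinal.{u}} (X : Set (M ≃[L] M)) {β : Type u} (F : IER L M β)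
    {b b' : β → M} (h : F.rel b b') (hB : BddU L M κ X F b) : BddU L M κ X F b' := by
  obtain ⟨S, h1, h2⟩ := hB
  refine ⟨S, h1, ?_⟩
  intro σ hσ
  obtain ⟨t, ht, hrel⟩ := h2 σ hσ
  refine ⟨t, ht, ?_⟩
  have hst : SameType L M (Sum.elim b b') (Sum.elim (⇑σ ∘ b) (⇑σ ∘ b')) := by
    intro φ
    have hc : ⇑σ ∘ (Sum.elim b b') = Sum.elim (⇑σ ∘ b) (⇑σ ∘ b') := by
      funext z; cases z <;> rfl
    rw [← hc]
    exact (Language.StrongHomClass.realize_formula σ φ).symm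
  have hσrel : F.rel (⇑σ ∘ b) (⇑σ ∘ b') := (F.invariant _ _ _ _ hst).mp h
  exact F.equiv.trans (F.equiv.symm hσrel) hrel
/-- For any ultraimaginary `a_E` and any cardinal `λ`, the set
`bddᵘ_λ(a_E)` of ultraimaginaries of arity at most `λ` (represented with index
types the subsets of a set `K` of size `λ`) bounded over `a_E` has cardinality at
most `2^(|a| + 2^(λ+|T|))`. -/
theorem statement_2 (L : FirstOrder.Language.{u, u}) (M : Type u) [L.Structure M]
    (κbar : Cardinal.{u}) (_mon : Monster L M κbar)
    {α : Type u} (hα : #α < κbar) (E : IER L M α) (a : α → M)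
    (lam : Cardinal.{u}) (hlam : lam < κbar) (K : Type u) (hK : #K = lam) :
    #{x : Σ s : Set K, Σ F : IER L M ↥s, Quotient F.setoid //
        ∃ dd : ↥x.1 → M, x.2.2 = Quotient.mk x.2.1.setoid dd ∧
          BddU L M κbar (autU L M E a) x.2.1 dd}
      ≤ 2 ^ (#α + 2 ^ (lam + cardT L)) := by
  classical
  obtain ⟨NN, hNa, hNcard, hTV⟩ := exists_NN L M _mon hα a
  have hcardTκ : cardT L < κbar :=
    Cardinal.add_lt_of_lt _mon.aleph0_lt.le _mon.lang_lt _mon.aleph0_lt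
  have hNκ : #↥NN < κbar :=
    lt_of_le_of_lt hNcard (Cardinal.add_lt_of_lt _mon.aleph0_lt.le hα hcardTκ)
  set T₀ : Cardinal.{u} := lam + cardT L with hT₀
  have hℵT₀ : ℵ₀ ≤ T₀ := by
    rw [hT₀]
    refine le_trans ?_ (self_le_add_left _ _)
    exact self_le_add_left _ _
  have hT₀pow : T₀ ≤ 2 ^ T₀ := (Cardinal.cantor T₀).le
  have hℵfin : ℵ₀ ≤ #α + 2 ^ T₀ :=
    le_trans (le_trans hℵT₀ hT₀pow) (self_le_add_left _ _)
  have hlamT₀ : lam ≤ T₀ := by rw [hT₀]; exact le_self_add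
  have hcardT₀ : cardT L ≤ T₀ := by rw [hT₀]; exact self_le_add_left _ _
  have hLT₀ : L.card ≤ T₀ := le_trans le_self_add hcardT₀
  -- the injection
  set J : {x : Σ s : Set K, Σ F : IER L M ↥s, Quotient F.setoid //
        ∃ dd : ↥x.1 → M, x.2.2 = Quotient.mk x.2.1.setoid dd ∧
          BddU L M κbar (autU L M E a) x.2.1 dd} →
      Σ s : Set K, (Set (Set (L.Formula (↥s ⊕ ↥s))) × Set (L.Formula (↥NN ⊕ ↥s))) :=
    fun x =>
      ⟨x.1.1, ({T : Set (L.Formula (↥x.1.1 ⊕ ↥x.1.1)) | ∃ u v : ↥x.1.1 → M,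
          x.1.2.1.rel u v ∧ T = {φ : L.Formula (↥x.1.1 ⊕ ↥x.1.1) | φ.Realize (Sum.elim u v)}},
        {φ : L.Formula (↥NN ⊕ ↥x.1.1) |
          φ.Realize (Sum.elim (Subtype.val : ↥NN → M) (Quotient.out x.1.2.2))})⟩ with hJ
  have hJinj : Function.Injective J := by
    rintro ⟨⟨s, F, q⟩, hx⟩ ⟨⟨s', F', q'⟩, hy⟩ hxy
    simp only [hJ] at hxy
    obtain ⟨h1, h2⟩ := Sigma.mk.inj_iff.mp hxy
    subst h1
    obtain ⟨hRel, hCls⟩ := Prod.mk.injEq _ _ _ _ |>.mp (eq_of_heq h2)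
    have hFF : F = F' := by
      refine IER.ext' L M (funext fun u => funext fun v => propext ?_)
      rw [IER.rel_iff_code L M F u v, IER.rel_iff_code L M F' u v, hRel]
    subst hFF
    have hsto : SameTypeOver L M NN (Quotient.out q) (Quotient.out q') :=
      fun φ => Set.ext_iff.mp hCls φ
    have hbdd : BddU L M κbar (autU L M E a) F (Quotient.out q) := by
      obtain ⟨dd, hdq, hbd⟩ := hx
      have hmk : Quotient.mk F.setoid dd = Quotient.mk F.setoid (Quotient.out q) := by
        rw [← hdq]
        exact (Quotient.out_eq q).symm
      exact bddU_congr L M _ F (Quotient.exact hmk) hbd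
    have hsκ : #↥s < κbar := lt_of_le_of_lt (Cardinal.mk_set_le s) (hK ▸ hlam)
    have hrel2 : F.rel (Quotient.out q) (Quotient.out q') :=
      key_lemma L M _mon E a NN hNa hNκ hTV hsκ F _ _ hbdd hsto
    have hqq : q = q' := by
      rw [← Quotient.out_eq q, ← Quotient.out_eq q']
      exact Quotient.sound hrel2
    subst hqq
    rfl
  refine le_trans (Cardinal.mk_le_of_injective hJinj) ?_
  -- counting the codes
  have hF1 : ∀ s : Set K, #(L.Formula (↥s ⊕ ↥s)) ≤ T₀ := by
    intro s
    refine (formula_card_le L _).trans (max_le hℵT₀ ?_)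
    have hs : #↥s ≤ lam := hK ▸ Cardinal.mk_set_le s
    refine Cardinal.add_le_of_le hℵT₀ ?_ hLT₀
    simp only [Cardinal.mk_sum, Cardinal.lift_id]
    exact Cardinal.add_le_of_le hℵT₀ (hs.trans hlamT₀) (hs.trans hlamT₀)
  have hpow2 : (2 : Cardinal.{u}) ^ T₀ ≤ #α + 2 ^ T₀ := self_le_add_left _ _
  have hF2 : ∀ s : Set K, #(L.Formula (↥NN ⊕ ↥s)) ≤ #α + 2 ^ T₀ := by
    intro s
    refine (formula_card_le L _).trans (max_le hℵfin ?_)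
    have hs : #↥s ≤ lam := hK ▸ Cardinal.mk_set_le s
    refine Cardinal.add_le_of_le hℵfin ?_ ((hLT₀.trans hT₀pow).trans hpow2)
    simp only [Cardinal.mk_sum, Cardinal.lift_id]
    refine Cardinal.add_le_of_le hℵfin ?_ (((hs.trans hlamT₀).trans hT₀pow).trans hpow2)
    exact hNcard.trans (add_le_add le_rfl (hcardT₀.trans hT₀pow))
  have hstep : ∀ s : Set K,
      #(Set (Set (L.Formula (↥s ⊕ ↥s))) × Set (L.Formula (↥NN ⊕ ↥s))) ≤
        (2 : Cardinal.{u}) ^ ((2 : Cardinal.{u}) ^ T₀) * 2 ^ (#α + 2 ^ T₀) := by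
    intro s
    rw [Cardinal.mk_prod, Cardinal.lift_id, Cardinal.lift_id, Cardinal.mk_set,
      Cardinal.mk_set, Cardinal.mk_set]
    refine mul_le_mul' ?_ ?_
    · exact Cardinal.power_le_power_left two_ne_zero
        (Cardinal.power_le_power_left two_ne_zero (hF1 s))
    · exact Cardinal.power_le_power_left two_ne_zero (hF2 s)
  calc #(Σ s : Set K, (Set (Set (L.Formula (↥s ⊕ ↥s))) × Set (L.Formula (↥NN ⊕ ↥s))))
      = Cardinal.sum (fun s : Set K =>
          #(Set (Set (L.Formula (↥s ⊕ ↥s))) × Set (L.Formula (↥NN ⊕ ↥s)))) :=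
        Cardinal.mk_sigma _
    _ ≤ Cardinal.sum (fun _ : Set K =>
          (2 : Cardinal.{u}) ^ ((2 : Cardinal.{u}) ^ T₀) * 2 ^ (#α + 2 ^ T₀)) :=
        Cardinal.sum_le_sum _ _ hstep
    _ = #(Set K) * ((2 : Cardinal.{u}) ^ ((2 : Cardinal.{u}) ^ T₀) * 2 ^ (#α + 2 ^ T₀)) :=
        Cardinal.sum_const' _ _
    _ = (2 : Cardinal.{u}) ^ lam * ((2 : Cardinal.{u}) ^ ((2 : Cardinal.{u}) ^ T₀) *
          2 ^ (#α + 2 ^ T₀)) := by rw [Cardinal.mk_set, hK]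
    _ ≤ (2 : Cardinal.{u}) ^ (#α + 2 ^ T₀) := by
        rw [← Cardinal.power_add, ← Cardinal.power_add]
        refine Cardinal.power_le_power_left two_ne_zero ?_
        refine Cardinal.add_le_of_le hℵfin ((hlamT₀.trans hT₀pow).trans hpow2) ?_
        exact Cardinal.add_le_of_le hℵfin hpow2 le_rfl

end BddUltra
end

section
/- Let G ≤ Aut(𝕄) be co-small, witnessed by a small model M with Aut(𝕄/M) ≤ G. Then there is an invariant equivalence relation E on realizations of the type of (an enumeration of) M such that G = Aut(𝕄/M_E), where M_E is the E-class of the enumeration of M. Concretely, the relation E(M₀,M₁) ⟺ 'there exist σ ∈ Aut(𝕄) and τ ∈ G with σ·M = M₀ and στ·M = M₁' is an invariant equivalence relation on realizations of tp(M), and Aut(𝕄/M_E) = G. -/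
open FirstOrder Cardinal

universe u v w

namespace BddUltra

variable (L : FirstOrder.Language.{u, u}) (M : Type u) [L.Structure M]

/-- Every co-small subgroup `G ≤ Aut(𝕄)`, witnessed by a small
model `N` with `Aut(𝕄/N) ≤ G`, is of the form `Aut(𝕄/N_E)` for the explicitly
defined invariant equivalence relation `E` on realizations of `tp(N)`:
`E(M₀, M₁)` iff there are `σ ∈ Aut(𝕄)` and `τ ∈ G` with `σ·N = M₀` and
`στ·N = M₁`. -/
theorem statement_3 (L : FirstOrder.Language.{u, u}) (M : Type u) [L.Structure M]
    (κbar : Cardinal.{u}) (_mon : Monster L M κbar)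
    (G : Subgroup (M ≃[L] M))
    (N : L.ElementarySubstructure M) (hN : #(N : Set M) < κbar)
    (hG : autES L M N ⊆ (G : Set (M ≃[L] M))) :
    let m : ↥(N : Set M) → M := Subtype.val
    let E : (↥(N : Set M) → M) → (↥(N : Set M) → M) → Prop := fun x y =>
      ∃ σ : M ≃[L] M, ∃ τ ∈ G, ⇑σ ∘ m = x ∧ (⇑σ ∘ ⇑τ) ∘ m = y
    (∀ x, SameType L M m x → E x x) ∧
    (∀ x y, E x y → E y x) ∧
    (∀ x y z, E x y → E y z → E x z) ∧
    (∀ x y x' y', SameType L M (Sum.elim x y) (Sum.elim x' y') → (E x y ↔ E x' y')) ∧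
    {σ : M ≃[L] M | E m (⇑σ ∘ m)} = (G : Set (M ≃[L] M)) := by
  intro m E
  -- automorphisms fixing m pointwise lie in G
  have hfix : ∀ σ : M ≃[L] M, (∀ i, σ (m i) = m i) → σ ∈ G := by
    intro σ h
    exact hG (fun x hx => h ⟨x, hx⟩)
  have hmul : ∀ σ τ : M ≃[L] M, ∀ x : M, (σ * τ) x = σ (τ x) := fun _ _ _ => rfl
  have hinv : ∀ (σ : M ≃[L] M) (x : M), σ (σ⁻¹ x) = x := fun σ x =>
    σ.toEquiv.apply_symm_apply x
  have hinv' : ∀ (σ : M ≃[L] M) (x : M), σ⁻¹ (σ x) = x := fun σ x =>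
    σ.toEquiv.symm_apply_apply x
  have hone : ∀ x : M, (1 : M ≃[L] M) x = x := fun _ => rfl
  refine ⟨?_, ?_, ?_, ?_, ?_⟩
  · -- reflexivity on realizations of tp(m)
    intro x hx
    obtain ⟨σ, hσ⟩ := _mon.homog _ m x hN hx
    exact ⟨σ, 1, G.one_mem, funext hσ, funext fun i => hσ i⟩
  · -- symmetry
    rintro x y ⟨σ, τ, hτ, h1, h2⟩
    refine ⟨σ * τ, τ⁻¹, G.inv_mem hτ, ?_, ?_⟩
    · funext i; exact congrFun h2 i
    · funext i
      show (σ * τ) (τ⁻¹ (m i)) = x i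
      rw [hmul, hinv]
      exact congrFun h1 i
  · -- transitivity
    rintro x y z ⟨σ, τ, hτ, h1, h2⟩ ⟨σ', τ', hτ', h1', h2'⟩
    have hρ : (τ⁻¹ * σ⁻¹ * σ' : M ≃[L] M) ∈ G := by
      apply hfix
      intro i
      have : σ' (m i) = σ (τ (m i)) := (congrFun h1' i).trans (congrFun h2 i).symm
      rw [hmul, hmul, this, hinv', hinv']
    refine ⟨σ, τ * (τ⁻¹ * σ⁻¹ * σ') * τ', G.mul_mem (G.mul_mem hτ hρ) hτ', h1, ?_⟩
    funext i
    show σ ((τ * (τ⁻¹ * σ⁻¹ * σ') * τ') (m i)) = z i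
    rw [hmul, hmul, hmul, hmul, hinv, hinv]
    exact congrFun h2' i
  · -- invariance
    intro x y x' y' hst
    have key : ∀ x y x' y' : ↥(N : Set M) → M,
        SameType L M (Sum.elim x y) (Sum.elim x' y') → E x y → E x' y' := by
      rintro x y x' y' hst ⟨σ, τ, hτ, h1, h2⟩
      have hcard : #(↥(N : Set M) ⊕ ↥(N : Set M)) < κbar := by
        have : #(↥(N : Set M) ⊕ ↥(N : Set M)) = #↥(N : Set M) + #↥(N : Set M) := by
          simp [Cardinal.mk_sum]
        rw [this]
        exact Cardinal.add_lt_of_lt _mon.aleph0_lt.le hN hN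
      obtain ⟨π, hπ⟩ := _mon.homog _ _ _ hcard hst
      refine ⟨π.comp σ, τ, hτ, ?_, ?_⟩
      · funext i
        show π ((⇑σ ∘ m) i) = x' i
        rw [congrFun h1 i]
        exact hπ (Sum.inl i)
      · funext i
        show π (((⇑σ ∘ ⇑τ) ∘ m) i) = y' i
        rw [congrFun h2 i]
        exact hπ (Sum.inr i)
    constructor
    · exact key x y x' y' hst
    · refine key x' y' x y ?_
      intro φ; exact (hst φ).symm
  · -- Aut(M/m_E) = G
    ext σ
    constructor
    · rintro ⟨π, τ, hτ, h1, h2⟩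
      have hπ : π ∈ G := hfix π fun i => congrFun h1 i
      have hρ : (τ⁻¹ * π⁻¹ * σ : M ≃[L] M) ∈ G := by
        apply hfix
        intro i
        have : σ (m i) = π (τ (m i)) := (congrFun h2 i).symm
        rw [hmul, hmul, this, hinv', hinv']
      have : σ = π * τ * (τ⁻¹ * π⁻¹ * σ) := by group
      rw [this]
      exact G.mul_mem (G.mul_mem hπ hτ) hρ
    · intro hσ
      exact ⟨1, σ, hσ, funext fun i => rfl, funext fun i => rfl⟩


end BddUltra
end
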